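/- arXiv:2406.06213 — 7 statements merged into one kernel-verified Lean document; each statement's English description precedes it below -/
import Mathlib

section
/- (Lower bound for the minimum norm estimator.) In fixed-design linear regression for a single task, suppose rank(X) = n < p (so that interpolation is feasible) and let γ_max > 0 denote the largest eigenvalue of Σ := XᵀX/n. Then any square-integrable estimator ŵ satisfying X ŵ = y almost surely — in particular the minimum norm estimator ŵ^MN := argmin{‖w − w₀‖² : X w = y} for any initialization w₀ — satisfies E‖ŵ − w*‖² ≥ σ² / γ_max. -/
open MeasureTheory Matrix ProbabilityTheory

lemma quad_form_le {m : ℕ} {A : Matrix (Fin m) (Fin m) ℝ} (hA : A.IsHermitian) {c : ℝ}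
    (hc : ∀ i, hA.eigenvalues i ≤ c) (v : Fin m → ℝ) :
    v ⬝ᵥ (A *ᵥ v) ≤ c * (v ⬝ᵥ v) := by
  classical
  set U : Matrix (Fin m) (Fin m) ℝ := (hA.eigenvectorUnitary : Matrix (Fin m) (Fin m) ℝ) with hU
  set w : Fin m → ℝ := star U *ᵥ v with hw
  have hUU : U * star U = 1 := (Matrix.mem_unitaryGroup_iff).mp hA.eigenvectorUnitary.2
  have hvw : w ⬝ᵥ w = v ⬝ᵥ v := by
    have : w ⬝ᵥ w = v ⬝ᵥ ((U * star U) *ᵥ v) := by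
      rw [hw, ← mulVec_mulVec]
      rw [star_eq_conjTranspose]
      rw [show Uᴴ = Uᵀ from Matrix.conjTranspose_eq_transpose_of_trivial U]
      rw [mulVec_transpose, dotProduct_mulVec, dotProduct_comm]
    rw [this, hUU, one_mulVec]
  have hAv : v ⬝ᵥ (A *ᵥ v) = ∑ i, hA.eigenvalues i * (w i * w i) := by
    conv_lhs => rw [hA.spectral_theorem, Unitary.conjStarAlgAut_apply]
    rw [← mulVec_mulVec, ← mulVec_mulVec]
    have h1 : v ⬝ᵥ (U *ᵥ (diagonal (RCLike.ofReal ∘ hA.eigenvalues) *ᵥ (star U *ᵥ v)))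
        = w ⬝ᵥ (diagonal (RCLike.ofReal ∘ hA.eigenvalues) *ᵥ w) := by
      rw [hw, star_eq_conjTranspose,
        show Uᴴ = Uᵀ from Matrix.conjTranspose_eq_transpose_of_trivial U,
        mulVec_transpose, dotProduct_mulVec]
    rw [h1, dotProduct]
    refine Finset.sum_congr rfl fun i _ => ?_
    rw [mulVec_diagonal]
    simp [RCLike.ofReal]
    ring
  rw [hAv, ← hvw, dotProduct]
  rw [Finset.mul_sum]
  refine Finset.sum_le_sum fun i _ => ?_
  have h0 : (0:ℝ) ≤ w i * w i := mul_self_nonneg _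
  exact mul_le_mul_of_nonneg_right (hc i) h0

lemma sq_sum_mulVec {n p : ℕ} (X : Matrix (Fin n) (Fin p) ℝ) (u : Fin p → ℝ) :
    ∑ i, (X *ᵥ u) i ^ 2 = u ⬝ᵥ ((Xᵀ * X) *ᵥ u) := by
  rw [← mulVec_mulVec, mulVec_transpose, dotProduct_comm, ← dotProduct_mulVec, dotProduct]
  exact Finset.sum_congr rfl fun i _ => (pow_two _)

/-- **Lower bound for the minimum norm estimator.**
In fixed-design linear regression with `rank X = n < p`, if `γmax > 0` is the
largest eigenvalue of `Σ = XᵀX/n`, then any square-integrable estimator `what`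
interpolating the data almost surely (in particular the minimum norm estimator)
satisfies `E‖ŵ − w*‖² ≥ σ²/γmax`. -/
theorem min_norm_lower_bound
    {Ω : Type} [MeasurableSpace Ω] (μ : Measure Ω) [IsProbabilityMeasure μ]
    (n p : ℕ) (hn : 0 < n) (hnp : n < p)
    (X : Matrix (Fin n) (Fin p) ℝ) (hrank : X.rank = n)
    (hherm : (((n : ℝ)⁻¹ • (Xᵀ * X)) : Matrix (Fin p) (Fin p) ℝ).IsHermitian)
    (γmax : ℝ) (hγmax : IsGreatest (Set.range hherm.eigenvalues) γmax)
    (hγpos : 0 < γmax)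
    (wstar : Fin p → ℝ)
    (σ2 : ℝ) (hσ2 : 0 < σ2)
    (ε : Ω → Fin n → ℝ)
    (hεL2 : ∀ i, MemLp (fun ω => ε ω i) 2 μ)
    (hmean : ∀ i, ∫ ω, ε ω i ∂μ = 0)
    (hcov : ∀ i i', ∫ ω, ε ω i * ε ω i' ∂μ = if i = i' then σ2 else 0)
    (y : Ω → Fin n → ℝ) (hy : ∀ ω, y ω = X *ᵥ wstar + ε ω)
    (what : Ω → Fin p → ℝ)
    (hwL2 : ∀ j, MemLp (fun ω => what ω j) 2 μ)
    (hinterp : ∀ᵐ ω ∂μ, X *ᵥ what ω = y ω) :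
    ∫ ω, ∑ j, (what ω j - wstar j) ^ 2 ∂μ ≥ σ2 / γmax := by
  set I := ∫ ω, ∑ j, (what ω j - wstar j) ^ 2 ∂μ with hI
  have heig : ∀ i, hherm.eigenvalues i ≤ γmax := fun i => hγmax.2 ⟨i, rfl⟩
  have hn0 : (0:ℝ) < n := by exact_mod_cast hn
  have hbound : ∀ u : Fin p → ℝ, ∑ i, (X *ᵥ u) i ^ 2 ≤ (n * γmax) * ∑ j, u j ^ 2 := by
    intro u
    have h1 := quad_form_le hherm heig u
    have h2 : u ⬝ᵥ (((n:ℝ)⁻¹ • (Xᵀ * X)) *ᵥ u) = (n:ℝ)⁻¹ * (u ⬝ᵥ ((Xᵀ * X) *ᵥ u)) := by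
      rw [smul_mulVec, dotProduct_smul, smul_eq_mul]
    rw [h2] at h1
    have hdp : u ⬝ᵥ u = ∑ j, u j ^ 2 := by
      rw [dotProduct]; exact Finset.sum_congr rfl fun j _ => (pow_two _).symm
    rw [sq_sum_mulVec]
    rw [hdp] at h1
    have h3 := mul_le_mul_of_nonneg_left h1 hn0.le
    rw [← mul_assoc, mul_inv_cancel₀ hn0.ne', one_mul] at h3
    rw [mul_assoc]
    exact h3
  have hae : ∀ᵐ ω ∂μ, ∑ i, ε ω i ^ 2 ≤ (n * γmax) * ∑ j, (what ω j - wstar j) ^ 2 := by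
    filter_upwards [hinterp] with ω hω
    have hXe : X *ᵥ (what ω - wstar) = ε ω := by
      rw [mulVec_sub, hω, hy, add_sub_cancel_left]
    calc ∑ i, ε ω i ^ 2 = ∑ i, (X *ᵥ (what ω - wstar)) i ^ 2 := by rw [hXe]
      _ ≤ (n * γmax) * ∑ j, (what ω - wstar) j ^ 2 := hbound _
      _ = (n * γmax) * ∑ j, (what ω j - wstar j) ^ 2 := rfl
  have hgint : Integrable (fun ω => ∑ j, (what ω j - wstar j) ^ 2) μ :=
    integrable_finset_sum _ fun j _ => ((hwL2 j).sub (memLp_const (wstar j))).integrable_sq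
  have hfint : Integrable (fun ω => ∑ i, ε ω i ^ 2) μ :=
    integrable_finset_sum _ fun i _ => (hεL2 i).integrable_sq
  have hEf : ∫ ω, ∑ i, ε ω i ^ 2 ∂μ = n * σ2 := by
    rw [integral_finset_sum _ fun i _ => (hεL2 i).integrable_sq]
    have hi : ∀ i : Fin n, ∫ ω, ε ω i ^ 2 ∂μ = σ2 := by
      intro i
      have h := hcov i i
      simp only [if_true, eq_self_iff_true] at h
      rw [← h]
      congr 1; funext ω; ring
    simp [hi, Finset.sum_const, Finset.card_fin, nsmul_eq_mul]
  have hle : ∫ ω, ∑ i, ε ω i ^ 2 ∂μ ≤ (n * γmax) * I := by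
    calc ∫ ω, ∑ i, ε ω i ^ 2 ∂μ
        ≤ ∫ ω, (n * γmax) * ∑ j, (what ω j - wstar j) ^ 2 ∂μ :=
          integral_mono_ae hfint (hgint.const_mul _) hae
      _ = (n * γmax) * I := by rw [integral_const_mul]
  rw [hEf] at hle
  rw [ge_iff_le, div_le_iff₀ hγpos]
  nlinarith
end

section
/- (One-step projected-error recursion for generalized ℓ₂-regularization.) Fix a task t with Σ_t = U Γ_t Uᵀ, where U is orthogonal with columns u_1,…,u_p and Γ_t = diag(γ_1^{(t)},…,γ_p^{(t)}), γ_j^{(t)} ≥ 0. Let H_t = U Λ_t Uᵀ with Λ_t = diag(λ_1^{(t)},…,λ_p^{(t)}) and λ_j^{(t)} + γ_j^{(t)} > 0 for every j. Let v be a square-integrable random vector in ℝ^p independent of ε_t, and let ŵ be the minimizer of w ↦ (1/n_t)‖X_t w − y_t‖² + (w − v)ᵀ H_t (w − v). Then for every j ∈ [p], writing e_prev := E[(u_jᵀ(v − w*))²], one has E[(u_jᵀ(ŵ − w*))²] = e_prev − 2 γ_j^{(t)} e_prev / (λ_j^{(t)} + γ_j^{(t)}) + ( (γ_j^{(t)})²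 e_prev + γ_j^{(t)} σ²/n_t ) / (λ_j^{(t)} + γ_j^{(t)})². -/
open MeasureTheory Matrix ProbabilityTheory

lemma aux_colspec {p : ℕ} (U : Matrix (Fin p) (Fin p) ℝ) (hU : Uᵀ * U = 1)
    (d : Fin p → ℝ) (j : Fin p) :
    (U * Matrix.diagonal d * Uᵀ) *ᵥ (fun k => U k j) = d j • (fun k => U k j) := by
  have hcol : (fun k => U k j) = U *ᵥ Pi.single j 1 := by
    funext k; simp [Matrix.mulVec_single]
  have hsingle : Pi.single j (d j * 1) = d j • (Pi.single j (1:ℝ) : Fin p → ℝ) := by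
    funext k
    by_cases hk : k = j
    · subst hk; simp
    · simp [Pi.single_eq_of_ne hk]
  rw [hcol, Matrix.mulVec_mulVec, Matrix.mul_assoc (U * Matrix.diagonal d) Uᵀ U, hU, mul_one,
    ← Matrix.mulVec_mulVec, Matrix.diagonal_mulVec_single, hsingle, Matrix.mulVec_smul]

lemma aux_unit {p : ℕ} (U : Matrix (Fin p) (Fin p) ℝ) (hU : Uᵀ * U = 1) (j : Fin p) :
    (fun k => U k j) ⬝ᵥ (fun k => U k j) = 1 := by
  have h := congrFun (congrFun hU j) j
  simpa [Matrix.mul_apply, Matrix.one_apply, dotProduct] using h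

lemma aux_symm {p : ℕ} (U : Matrix (Fin p) (Fin p) ℝ) (d : Fin p → ℝ) :
    (U * Matrix.diagonal d * Uᵀ)ᵀ = U * Matrix.diagonal d * Uᵀ := by
  simp [Matrix.transpose_mul, Matrix.diagonal_transpose, Matrix.mul_assoc]

lemma aux_proj {p : ℕ} (U : Matrix (Fin p) (Fin p) ℝ) (hU : Uᵀ * U = 1)
    (d : Fin p → ℝ) (j : Fin p) (w : Fin p → ℝ) :
    (fun k => U k j) ⬝ᵥ ((U * Matrix.diagonal d * Uᵀ) *ᵥ w)
      = d j * ((fun k => U k j) ⬝ᵥ w) := by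
  rw [Matrix.dotProduct_mulVec, ← Matrix.mulVec_transpose, aux_symm, aux_colspec U hU d j,
    smul_dotProduct]
  rfl

lemma aux_quad_zero {Q L : ℝ} (hQ : 0 < Q) (h : ∀ c : ℝ, 0 ≤ Q * c ^ 2 + L * c) :
    L = 0 := by
  by_contra hne
  have h1 := h (-(L / (2 * Q)))
  have h2 : Q * (-(L / (2 * Q))) ^ 2 + L * (-(L / (2 * Q))) = -(L ^ 2 / (4 * Q)) := by
    field_simp; ring
  rw [h2] at h1
  have h3 : 0 < L ^ 2 / (4 * Q) := div_pos (by positivity) (by linarith)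
  linarith

lemma aux_sum_sq {n : ℕ} (r d : Fin n → ℝ) (c : ℝ) :
    ∑ i, (r i + c * d i) ^ 2
      = ∑ i, r i ^ 2 + 2 * c * (r ⬝ᵥ d) + c ^ 2 * (d ⬝ᵥ d) := by
  have h : ∀ i : Fin n, (r i + c * d i) ^ 2
      = r i ^ 2 + 2 * c * (r i * d i) + c ^ 2 * (d i * d i) := fun i => by ring
  rw [Finset.sum_congr rfl fun i _ => h i]
  rw [Finset.sum_add_distrib, Finset.sum_add_distrib, ← Finset.mul_sum, ← Finset.mul_sum]
  rfl

lemma aux_L2_mul_int {Ω : Type} [MeasurableSpace Ω] {μ : Measure Ω} [IsProbabilityMeasure μ]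
    {f g : Ω → ℝ} (hf : MemLp f 2 μ) (hg : MemLp g 2 μ) :
    Integrable (fun ω => f ω * g ω) μ := by
  have h1 := (hf.add hg).integrable_sq
  have h2 := hf.integrable_sq
  have h3 := hg.integrable_sq
  have heq : (fun ω => f ω * g ω)
      = fun ω => (((f + g) ω) ^ 2 - f ω ^ 2 - g ω ^ 2) / 2 := by
    funext ω; simp [Pi.add_apply]; ring
  rw [heq]
  exact ((h1.sub h2).sub h3).div_const 2

/-- **One-step projected-error recursion for generalized
ℓ₂-regularization.** With `Σ_t = U Γ_t Uᵀ`, `H_t = U Λ_t Uᵀ`,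
`λ_j + γ_j > 0`, and previous estimate `v` independent of the noise, the
generalized ℓ₂-regularized update `ŵ` satisfies, for every `j`, with
`e_prev = E[(u_jᵀ(v−w*))²]`:
`E[(u_jᵀ(ŵ−w*))²] = e_prev − 2 γ_j e_prev/(λ_j+γ_j)
   + (γ_j² e_prev + γ_j σ²/n)/(λ_j+γ_j)²`. -/
theorem one_step_projected_error_recursion
    {Ω : Type} [MeasurableSpace Ω] (μ : Measure Ω) [IsProbabilityMeasure μ]
    (n p : ℕ) (hn : 0 < n)
    (X : Matrix (Fin n) (Fin p) ℝ)
    (U : Matrix (Fin p) (Fin p) ℝ) (hU : Uᵀ * U = 1)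
    (γ : Fin p → ℝ) (hγ : ∀ j, 0 ≤ γ j)
    (hSig : (n : ℝ)⁻¹ • (Xᵀ * X) = U * Matrix.diagonal γ * Uᵀ)
    (lam : Fin p → ℝ) (hlamγ : ∀ j, 0 < lam j + γ j)
    (wstar : Fin p → ℝ)
    (σ2 : ℝ) (hσ2 : 0 < σ2)
    (ε : Ω → Fin n → ℝ)
    (hεL2 : ∀ i, MemLp (fun ω => ε ω i) 2 μ)
    (hmean : ∀ i, ∫ ω, ε ω i ∂μ = 0)
    (hcov : ∀ i i', ∫ ω, ε ω i * ε ω i' ∂μ = if i = i' then σ2 else 0)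
    (v : Ω → Fin p → ℝ)
    (hvL2 : ∀ j, MemLp (fun ω => v ω j) 2 μ)
    (hindep : IndepFun v ε μ)
    (what : Ω → Fin p → ℝ)
    (hwL2 : ∀ j, MemLp (fun ω => what ω j) 2 μ)
    -- `what ω` minimizes the generalized ℓ₂-regularized objective centered at `v ω`
    (hmin : ∀ ω w, (n : ℝ)⁻¹ * ∑ i, (X *ᵥ what ω - (X *ᵥ wstar + ε ω)) i ^ 2
          + (what ω - v ω) ⬝ᵥ ((U * Matrix.diagonal lam * Uᵀ) *ᵥ (what ω - v ω))
        ≤ (n : ℝ)⁻¹ * ∑ i, (X *ᵥ w - (X *ᵥ wstar + ε ω)) i ^ 2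
          + (w - v ω) ⬝ᵥ ((U * Matrix.diagonal lam * Uᵀ) *ᵥ (w - v ω))) :
    ∀ j, ∫ ω, (∑ k, U k j * (what ω k - wstar k)) ^ 2 ∂μ
      = (∫ ω, (∑ k, U k j * (v ω k - wstar k)) ^ 2 ∂μ)
        - 2 * γ j * (∫ ω, (∑ k, U k j * (v ω k - wstar k)) ^ 2 ∂μ) / (lam j + γ j)
        + ((γ j) ^ 2 * (∫ ω, (∑ k, U k j * (v ω k - wstar k)) ^ 2 ∂μ)
            + γ j * σ2 / n) / (lam j + γ j) ^ 2 := by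
  intro j
  have hn0 : (n : ℝ) ≠ 0 := Nat.cast_ne_zero.mpr hn.ne'
  have hQ : 0 < lam j + γ j := hlamγ j
  -- notation
  set u : Fin p → ℝ := fun k => U k j with hu_def
  have hXX : Xᵀ * X = (n:ℝ) • (U * Matrix.diagonal γ * Uᵀ) := by
    rw [← hSig, smul_smul, mul_inv_cancel₀ hn0, one_smul]
  have huu : u ⬝ᵥ u = 1 := aux_unit U hU j
  have hprojγ : ∀ w : Fin p → ℝ,
      u ⬝ᵥ ((U * Matrix.diagonal γ * Uᵀ) *ᵥ w) = γ j * (u ⬝ᵥ w) :=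
    fun w => aux_proj U hU γ j w
  have hprojlam : ∀ w : Fin p → ℝ,
      u ⬝ᵥ ((U * Matrix.diagonal lam * Uᵀ) *ᵥ w) = lam j * (u ⬝ᵥ w) :=
    fun w => aux_proj U hU lam j w
  have hcolH : (U * Matrix.diagonal lam * Uᵀ) *ᵥ u = lam j • u := aux_colspec U hU lam j
  have hXu : ∀ w : Fin p → ℝ, (X *ᵥ u) ⬝ᵥ (X *ᵥ w) = (n:ℝ) * (γ j * (u ⬝ᵥ w)) := by
    intro w
    rw [dotProduct_comm, Matrix.dotProduct_mulVec, ← Matrix.mulVec_transpose,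
      Matrix.mulVec_mulVec, hXX, Matrix.smul_mulVec, dotProduct_comm,
      dotProduct_smul, smul_eq_mul, hprojγ]
  have hdd : (X *ᵥ u) ⬝ᵥ (X *ᵥ u) = (n:ℝ) * γ j := by
    rw [hXu u, huu, mul_one]
  -- the normal equation in direction u
  have key : ∀ ω, (lam j + γ j) * (u ⬝ᵥ (what ω - wstar))
      = lam j * (u ⬝ᵥ (v ω - wstar)) + (n:ℝ)⁻¹ * ((X *ᵥ u) ⬝ᵥ ε ω) := by
    intro ω
    set Lv : ℝ := 2 * (γ j * (u ⬝ᵥ (what ω - wstar)) + lam j * (u ⬝ᵥ (what ω - v ω))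
      - (n:ℝ)⁻¹ * ((X *ᵥ u) ⬝ᵥ ε ω)) with hLv_def
    have hineq : ∀ c : ℝ, 0 ≤ (lam j + γ j) * c ^ 2 + Lv * c := by
      intro c
      have h := hmin ω (what ω + c • u)
      have hvec : ∀ i, (X *ᵥ (what ω + c • u) - (X *ᵥ wstar + ε ω)) i
          = (X *ᵥ what ω - (X *ᵥ wstar + ε ω)) i + c * (X *ᵥ u) i := by
        intro i
        simp [Matrix.mulVec_add, Matrix.mulVec_smul]
        ring
      have hsum : ∑ i, (X *ᵥ (what ω + c • u) - (X *ᵥ wstar + ε ω)) i ^ 2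
          = ∑ i, (X *ᵥ what ω - (X *ᵥ wstar + ε ω)) i ^ 2
            + 2 * c * ((X *ᵥ what ω - (X *ᵥ wstar + ε ω)) ⬝ᵥ (X *ᵥ u))
            + c ^ 2 * ((X *ᵥ u) ⬝ᵥ (X *ᵥ u)) := by
        rw [Finset.sum_congr rfl fun i _ => by rw [hvec i]]
        exact aux_sum_sq _ _ c
      have hq : what ω + c • u - v ω = (what ω - v ω) + c • u := by
        rw [add_sub_right_comm]
      have hH : ((what ω - v ω) + c • u) ⬝ᵥ
            ((U * Matrix.diagonal lam * Uᵀ) *ᵥ ((what ω - v ω) + c • u))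
          = (what ω - v ω) ⬝ᵥ ((U * Matrix.diagonal lam * Uᵀ) *ᵥ (what ω - v ω))
            + 2 * c * (lam j * (u ⬝ᵥ (what ω - v ω))) + c ^ 2 * lam j := by
        rw [Matrix.mulVec_add, Matrix.mulVec_smul, hcolH]
        simp only [dotProduct_add, add_dotProduct, dotProduct_smul,
          smul_dotProduct, smul_eq_mul, huu, hprojlam,
          dotProduct_comm (what ω - v ω) u]
        ring
      rw [hq, hsum, hH] at h
      have hdist : (n:ℝ)⁻¹ * (∑ i, (X *ᵥ what ω - (X *ᵥ wstar + ε ω)) i ^ 2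
            + 2 * c * ((X *ᵥ what ω - (X *ᵥ wstar + ε ω)) ⬝ᵥ (X *ᵥ u))
            + c ^ 2 * ((X *ᵥ u) ⬝ᵥ (X *ᵥ u)))
          = (n:ℝ)⁻¹ * ∑ i, (X *ᵥ what ω - (X *ᵥ wstar + ε ω)) i ^ 2
            + 2 * c * ((n:ℝ)⁻¹ * ((X *ᵥ what ω - (X *ᵥ wstar + ε ω)) ⬝ᵥ (X *ᵥ u)))
            + c ^ 2 * ((n:ℝ)⁻¹ * ((X *ᵥ u) ⬝ᵥ (X *ᵥ u))) := by ring
      have hrd' : (n:ℝ)⁻¹ * ((X *ᵥ what ω - (X *ᵥ wstar + ε ω)) ⬝ᵥ (X *ᵥ u))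
          = γ j * (u ⬝ᵥ (what ω - wstar)) - (n:ℝ)⁻¹ * ((X *ᵥ u) ⬝ᵥ ε ω) := by
        rw [sub_dotProduct, add_dotProduct,
          dotProduct_comm (X *ᵥ what ω), hXu,
          dotProduct_comm (X *ᵥ wstar), hXu,
          dotProduct_comm (ε ω), dotProduct_sub]
        field_simp
        ring
      have hdd' : (n:ℝ)⁻¹ * ((X *ᵥ u) ⬝ᵥ (X *ᵥ u)) = γ j := by
        rw [hdd]; field_simp
      rw [hdist, hrd', hdd'] at h
      rw [hLv_def]
      linarith
    have hLv0 : Lv = 0 := aux_quad_zero hQ hineq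
    have h1 : u ⬝ᵥ (what ω - wstar) = u ⬝ᵥ what ω - u ⬝ᵥ wstar := dotProduct_sub u _ _
    have h2 : u ⬝ᵥ (what ω - v ω) = u ⬝ᵥ what ω - u ⬝ᵥ v ω := dotProduct_sub u _ _
    have h3 : u ⬝ᵥ (v ω - wstar) = u ⬝ᵥ v ω - u ⬝ᵥ wstar := dotProduct_sub u _ _
    rw [hLv_def] at hLv0
    rw [h1, h3]
    rw [h1, h2] at hLv0
    linarith
  -- scalar random variables
  set sf : Ω → ℝ := fun ω => u ⬝ᵥ (v ω - wstar) with hsf_def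
  set ef : Ω → ℝ := fun ω => (n:ℝ)⁻¹ * ((X *ᵥ u) ⬝ᵥ ε ω) with hef_def
  have hformula : ∀ ω, (∑ k, U k j * (what ω k - wstar k))
      = (lam j * sf ω + ef ω) / (lam j + γ j) := by
    intro ω
    have hx : (∑ k, U k j * (what ω k - wstar k)) = u ⬝ᵥ (what ω - wstar) := rfl
    rw [hx, eq_div_iff hQ.ne']
    have := key ω
    rw [hsf_def, hef_def]
    ring_nf
    ring_nf at this
    linarith
  -- L² membership
  have hsL2 : MemLp sf 2 μ := by
    have h1 : MemLp (fun ω => ∑ k, U k j * v ω k) 2 μ := by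
      have h := memLp_finset_sum' (μ := μ) Finset.univ
        (f := fun k (ω : Ω) => U k j * v ω k) (fun k _ => (hvL2 k).const_mul (U k j))
      simpa [Finset.sum_fn] using h
    have h2 : sf = fun ω => (∑ k, U k j * v ω k) - ∑ k, U k j * wstar k := by
      funext ω
      simp [hsf_def, dotProduct, mul_sub, Finset.sum_sub_distrib]
      rfl
    rw [h2]
    exact h1.sub (memLp_const _)
  have hef_sum : ef = fun ω => ∑ i, ((n:ℝ)⁻¹ * (X *ᵥ u) i) * ε ω i := by
    funext ω
    simp [hef_def, dotProduct, Finset.mul_sum, mul_assoc]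
  have heL2 : MemLp ef 2 μ := by
    have h1 : MemLp (fun ω => ∑ i, ((n:ℝ)⁻¹ * (X *ᵥ u) i) * ε ω i) 2 μ := by
      have h := memLp_finset_sum' (μ := μ) Finset.univ
        (f := fun i (ω : Ω) => ((n:ℝ)⁻¹ * (X *ᵥ u) i) * ε ω i)
        (fun i _ => (hεL2 i).const_mul _)
      simpa [Finset.sum_fn] using h
    rw [hef_sum]; exact h1
  -- mean of the noise term
  have hIe : ∫ ω, ef ω ∂μ = 0 := by
    rw [hef_sum]
    rw [integral_finset_sum _ (fun i _ => (((hεL2 i).integrable one_le_two).const_mul _))]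
    refine Finset.sum_eq_zero fun i _ => ?_
    rw [integral_const_mul, hmean, mul_zero]
  -- cross term vanishes by independence
  have hIse : ∫ ω, sf ω * ef ω ∂μ = 0 := by
    have hφ : Measurable fun (x : Fin p → ℝ) => u ⬝ᵥ (x - wstar) := by
      have : Measurable fun (x : Fin p → ℝ) => ∑ k, u k * (x k - wstar k) :=
        Finset.measurable_sum _ fun k _ =>
          (((measurable_pi_apply k).sub measurable_const :
            Measurable fun x : Fin p → ℝ => x k - wstar k)).const_mul (u k)
      exact this
    have hψ : Measurable fun (y : Fin n → ℝ) => (n:ℝ)⁻¹ * ((X *ᵥ u) ⬝ᵥ y) := by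
      have : Measurable fun (y : Fin n → ℝ) => ∑ i, (X *ᵥ u) i * y i :=
        Finset.measurable_sum _ fun i _ => (measurable_pi_apply i).const_mul _
      exact this.const_mul _
    have hiS : IndepFun sf ef μ := hindep.comp hφ hψ
    have hmul := hiS.integral_fun_mul_eq_mul_integral hsL2.aestronglyMeasurable heL2.aestronglyMeasurable
    calc ∫ ω, sf ω * ef ω ∂μ = (∫ ω, sf ω ∂μ) * ∫ ω, ef ω ∂μ := hmul
      _ = 0 := by rw [hIe, mul_zero]
  -- second moment of the noise term
  have hIee : ∫ ω, ef ω ^ 2 ∂μ = γ j * σ2 / n := by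
    have hpt : ∀ ω, ef ω ^ 2 = ∑ i, ∑ i',
        (((n:ℝ)⁻¹ * (X *ᵥ u) i) * ((n:ℝ)⁻¹ * (X *ᵥ u) i')) * (ε ω i * ε ω i') := by
      intro ω
      rw [show ef ω = ∑ i, ((n:ℝ)⁻¹ * (X *ᵥ u) i) * ε ω i from congrFun hef_sum ω,
        sq, Finset.sum_mul_sum]
      exact Finset.sum_congr rfl fun i _ => Finset.sum_congr rfl fun i' _ => by ring
    have h1 : ∫ ω, ef ω ^ 2 ∂μ = ∑ i, ∑ i',
        (((n:ℝ)⁻¹ * (X *ᵥ u) i) * ((n:ℝ)⁻¹ * (X *ᵥ u) i')) * ∫ ω, ε ω i * ε ω i' ∂μ := by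
      rw [show (fun ω => ef ω ^ 2) = fun ω => ∑ i, ∑ i',
        (((n:ℝ)⁻¹ * (X *ᵥ u) i) * ((n:ℝ)⁻¹ * (X *ᵥ u) i')) * (ε ω i * ε ω i')
        from funext hpt]
      rw [integral_finset_sum _ (fun i _ => integrable_finset_sum _
        (fun i' _ => (aux_L2_mul_int (hεL2 i) (hεL2 i')).const_mul _))]
      refine Finset.sum_congr rfl fun i _ => ?_
      rw [integral_finset_sum _ (fun i' _ => (aux_L2_mul_int (hεL2 i) (hεL2 i')).const_mul _)]
      exact Finset.sum_congr rfl fun i' _ => integral_const_mul _ _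
    rw [h1]
    simp only [hcov, mul_ite, mul_zero]
    rw [Finset.sum_congr rfl fun i (_ : i ∈ Finset.univ) => Finset.sum_ite_eq Finset.univ i
      (fun i' => ((n:ℝ)⁻¹ * (X *ᵥ u) i) * ((n:ℝ)⁻¹ * (X *ᵥ u) i') * σ2)]
    simp only [Finset.mem_univ, if_true]
    have hcc : ∑ i, (X *ᵥ u) i * (X *ᵥ u) i = (n:ℝ) * γ j := hdd
    have h2 : ∑ i, ((n:ℝ)⁻¹ * (X *ᵥ u) i) * ((n:ℝ)⁻¹ * (X *ᵥ u) i) * σ2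
        = (n:ℝ)⁻¹ * (n:ℝ)⁻¹ * σ2 * ∑ i, (X *ᵥ u) i * (X *ᵥ u) i := by
      rw [Finset.mul_sum]
      exact Finset.sum_congr rfl fun i _ => by ring
    rw [h2, hcc]
    field_simp
  -- assemble
  have hptA : (fun ω => (∑ k, U k j * (what ω k - wstar k)) ^ 2)
      = fun ω => ((lam j + γ j)^2)⁻¹ *
          ((lam j)^2 * sf ω ^ 2 + (2 * lam j) * (sf ω * ef ω) + ef ω ^ 2) := by
    funext ω
    rw [hformula ω, div_pow]
    rw [div_eq_mul_inv, mul_comm]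
    congr 1
    ring
  have int1 : Integrable (fun ω => (lam j)^2 * sf ω ^ 2) μ :=
    hsL2.integrable_sq.const_mul _
  have int2 : Integrable (fun ω => (2 * lam j) * (sf ω * ef ω)) μ :=
    (aux_L2_mul_int hsL2 heL2).const_mul _
  have int3 : Integrable (fun ω => ef ω ^ 2) μ := heL2.integrable_sq
  have hmain : ∫ ω, (∑ k, U k j * (what ω k - wstar k)) ^ 2 ∂μ
      = ((lam j + γ j)^2)⁻¹ *
          ((lam j)^2 * (∫ ω, sf ω ^ 2 ∂μ) + γ j * σ2 / n) := by
    rw [show (∫ ω, (∑ k, U k j * (what ω k - wstar k)) ^ 2 ∂μ)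
      = ∫ ω, ((lam j + γ j)^2)⁻¹ *
          ((lam j)^2 * sf ω ^ 2 + (2 * lam j) * (sf ω * ef ω) + ef ω ^ 2) ∂μ
      from by rw [← hptA]]
    have int12 : Integrable (fun ω => (lam j)^2 * sf ω ^ 2
        + (2 * lam j) * (sf ω * ef ω)) μ := int1.add int2
    rw [integral_const_mul, integral_add int12 int3, integral_add int1 int2,
      integral_const_mul, integral_const_mul, hIse, hIee]
    ring
  have hE : ∫ ω, sf ω ^ 2 ∂μ = ∫ ω, (∑ k, U k j * (v ω k - wstar k)) ^ 2 ∂μ := rfl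
  rw [hmain, hE]
  set E := ∫ ω, (∑ k, U k j * (v ω k - wstar k)) ^ 2 ∂μ
  field_simp
  ring
end

section
/- (Oracle rate of the optimally tuned generalized ℓ₂-regularized estimator, Theorem 4.2.) Under the shared assumptions, suppose additionally u_jᵀ w* ≠ 0 for every j ∈ [p], and run the GR algorithm with H_t = U Λ_t Uᵀ where λ_j^{(t)} = ( σ²/e_j^{(0)} + γ_j^{(1)} n₁ + ⋯ + γ_j^{(t−1)} n_{t−1} ) / n_t for every j ∈ [p] and t ∈ [T]. Then for every t ∈ [T] and j ∈ [p], E[e_j^{(t)}] = σ² / ( σ²/e_j^{(0)} + γ_j^{(1)} n₁ + ⋯ + γ_j^{(t)} n_t ), and consequently L(ŵ_t^{GR}) = ∑_{j=1}^p σ² / ( σ²/e_j^{(0)} + γ_j^{(1)} n₁ + ⋯ + γ_j^{(t)} n_t ). -/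
open MeasureTheory Matrix ProbabilityTheory Finset

private lemma integrable_mul_of_memL2 {Ω : Type} [MeasurableSpace Ω] {μ : Measure Ω}
    [IsFiniteMeasure μ] {f g : Ω → ℝ} (hf : MemLp f 2 μ) (hg : MemLp g 2 μ) :
    Integrable (fun ω => f ω * g ω) μ := by
  have h := (hg.smul hf (p := 2) (q := 2) (r := 1)).integrable le_rfl
  exact h.congr (Filter.Eventually.of_forall fun ω => by
    simp [Pi.smul_apply, smul_eq_mul, mul_comm])

private lemma sum_sq_expand' {ι κ : Type} [Fintype ι] [Fintype κ] [DecidableEq κ]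
    (A : ι → κ → ℝ) (z : κ → ℝ) (N : ℝ) (c : κ → ℝ)
    (h : ∀ j j', ∑ i, A i j * A i j' = N * (if j = j' then c j else 0)) :
    ∑ i, (∑ j, A i j * z j) ^ 2 = N * ∑ j, c j * z j ^ 2 := by
  have h1 : ∀ i : ι, (∑ j, A i j * z j) ^ 2
      = ∑ j, ∑ j', (z j * z j') * (A i j * A i j') := by
    intro i
    rw [pow_two, Finset.sum_mul_sum]
    exact sum_congr rfl fun j _ => sum_congr rfl fun j' _ => by ring
  simp_rw [h1]
  calc ∑ i, ∑ j, ∑ j', (z j * z j') * (A i j * A i j')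
      = ∑ j, ∑ j', ∑ i, (z j * z j') * (A i j * A i j') := by
        rw [Finset.sum_comm]
        exact sum_congr rfl fun j _ => Finset.sum_comm
    _ = ∑ j, ∑ j', (z j * z j') * (N * if j = j' then c j else 0) := by
        refine sum_congr rfl fun j _ => sum_congr rfl fun j' _ => ?_
        rw [← Finset.mul_sum, h]
    _ = N * ∑ j, c j * z j ^ 2 := by
        simp only [mul_ite, mul_zero, Finset.sum_ite_eq, mem_univ, if_true]
        rw [Finset.mul_sum]
        exact sum_congr rfl fun j _ => by ring

private lemma sum_mul_expand' {ι κ : Type} [Fintype ι] [Fintype κ]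
    (A : ι → κ → ℝ) (z : κ → ℝ) (e : ι → ℝ) :
    ∑ i, (∑ j, A i j * z j) * e i = ∑ j, z j * ∑ i, A i j * e i := by
  simp_rw [Finset.sum_mul]
  rw [Finset.sum_comm]
  refine sum_congr rfl fun j _ => ?_
  rw [Finset.mul_sum]
  exact sum_congr rfl fun i _ => by ring

private lemma rate_step' (σ2 s N g : ℝ) (hs : 0 < s) (hN : 0 < N) (hg : 0 ≤ g) :
    ((g + s / N)⁻¹) ^ 2 * ((s / N) ^ 2 * (σ2 / s) + (2 * (s / N) * 0 + σ2 * g / N))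
      = σ2 / (s + g * N) := by
  have hc : 0 < g + s / N := by positivity
  have hsg : 0 < s + g * N := by positivity
  field_simp
  ring

set_option maxHeartbeats 1000000

/-- **Oracle rate of the optimally tuned generalized
ℓ₂-regularized estimator, Theorem 4.2.** Under simultaneously diagonalizable
covariances `Σ_t = U Γ_t Uᵀ`, `∑_t γ_j^{(t)} > 0` and `u_jᵀ w* ≠ 0` for all `j`,
running the GR algorithm with `H_t = U Λ_t Uᵀ` and
`λ_j^{(t)} = (σ²/e_j^{(0)} + ∑_{τ<t} γ_j^{(τ)} n_τ)/n_t` yields, for every task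
`t` and direction `j`,
`E[e_j^{(t)}] = σ²/(σ²/e_j^{(0)} + ∑_{τ≤t} γ_j^{(τ)} n_τ)`, and consequently
`L(ŵ_t^{GR}) = ∑_j σ²/(σ²/e_j^{(0)} + ∑_{τ≤t} γ_j^{(τ)} n_τ)`. -/
theorem gr_oracle_rate
    {Ω : Type} [MeasurableSpace Ω] (μ : Measure Ω) [IsProbabilityMeasure μ]
    (T p : ℕ)
    (n : Fin T → ℕ) (hn : ∀ t, 0 < n t)
    (X : (t : Fin T) → Matrix (Fin (n t)) (Fin p) ℝ)
    (U : Matrix (Fin p) (Fin p) ℝ) (hU : Uᵀ * U = 1)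
    (γ : Fin T → Fin p → ℝ) (hγ : ∀ t j, 0 ≤ γ t j)
    (hSig : ∀ t, ((n t : ℝ))⁻¹ • ((X t)ᵀ * X t) = U * Matrix.diagonal (γ t) * Uᵀ)
    (hfull : ∀ j, 0 < ∑ t, γ t j)
    (wstar : Fin p → ℝ) (hwstar : ∀ j, ∑ k, U k j * wstar k ≠ 0)
    (σ2 : ℝ) (hσ2 : 0 < σ2)
    (ε : (t : Fin T) → Ω → Fin (n t) → ℝ)
    (hεL2 : ∀ t i, MemLp (fun ω => ε t ω i) 2 μ)
    (hmean : ∀ t i, ∫ ω, ε t ω i ∂μ = 0)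
    (hcov : ∀ t i i', ∫ ω, ε t ω i * ε t ω i' ∂μ = if i = i' then σ2 else 0)
    (hindep : iIndepFun ε μ)
    -- optimal regularization weights
    (lam : Fin T → Fin p → ℝ)
    (hlam : ∀ t j, lam t j
      = (σ2 / (∑ k, U k j * wstar k) ^ 2
          + ∑ τ ∈ Finset.univ.filter (fun τ => τ < t), γ τ j * n τ) / n t)
    -- the GR iterates
    (what : ℕ → Ω → Fin p → ℝ)
    (h0 : ∀ ω, what 0 ω = 0)
    (hmin : ∀ (t : Fin T) (ω : Ω) (w : Fin p → ℝ),
      (n t : ℝ)⁻¹ * ∑ i, (X t *ᵥ what ((t : ℕ) + 1) ω - (X t *ᵥ wstar + ε t ω)) i ^ 2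
        + (what ((t : ℕ) + 1) ω - what (t : ℕ) ω) ⬝ᵥ
            ((U * Matrix.diagonal (lam t) * Uᵀ) *ᵥ
              (what ((t : ℕ) + 1) ω - what (t : ℕ) ω))
      ≤ (n t : ℝ)⁻¹ * ∑ i, (X t *ᵥ w - (X t *ᵥ wstar + ε t ω)) i ^ 2
        + (w - what (t : ℕ) ω) ⬝ᵥ
            ((U * Matrix.diagonal (lam t) * Uᵀ) *ᵥ (w - what (t : ℕ) ω))) :
    (∀ (t : Fin T) (j : Fin p),
        ∫ ω, (∑ k, U k j * (what ((t : ℕ) + 1) ω k - wstar k)) ^ 2 ∂μ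
          = σ2 / (σ2 / (∑ k, U k j * wstar k) ^ 2
              + ∑ τ ∈ Finset.univ.filter (fun τ => τ ≤ t), γ τ j * n τ))
    ∧ (∀ t : Fin T,
        ∫ ω, ∑ j, (what ((t : ℕ) + 1) ω j - wstar j) ^ 2 ∂μ
          = ∑ j, σ2 / (σ2 / (∑ k, U k j * wstar k) ^ 2
              + ∑ τ ∈ Finset.univ.filter (fun τ => τ ≤ t), γ τ j * n τ)) := by
  -- basic facts
  have hUUT : U * Uᵀ = 1 := mul_eq_one_comm.mp hU
  have hnR : ∀ t : Fin T, (0:ℝ) < (n t : ℝ) := fun t => by exact_mod_cast hn t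
  have he0 : ∀ j, 0 < (∑ k, U k j * wstar k) ^ 2 := fun j =>
    pow_two_pos_of_ne_zero (hwstar j)
  have hlampos : ∀ t j, 0 < lam t j := by
    intro t j
    rw [hlam t j]
    refine div_pos (add_pos_of_pos_of_nonneg (div_pos hσ2 (he0 j)) ?_) (hnR t)
    exact Finset.sum_nonneg fun τ _ => mul_nonneg (hγ τ j) (Nat.cast_nonneg _)
  have hcpos : ∀ t j, 0 < γ t j + lam t j := fun t j =>
    add_pos_of_nonneg_of_pos (hγ t j) (hlampos t j)
  -- column structure of X t * U
  have hXU : ∀ t j j', ∑ i, (X t * U) i j * (X t * U) i j'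
      = (n t : ℝ) * (if j = j' then γ t j else 0) := by
    intro t j j'
    have hM : (X t)ᵀ * X t = (n t : ℝ) • (U * Matrix.diagonal (γ t) * Uᵀ) := by
      rw [← hSig t, smul_smul, mul_inv_cancel₀ (ne_of_gt (hnR t)), one_smul]
    have key : (X t * U)ᵀ * (X t * U) = (n t : ℝ) • Matrix.diagonal (γ t) := by
      rw [Matrix.transpose_mul]
      calc Uᵀ * (X t)ᵀ * (X t * U) = Uᵀ * ((X t)ᵀ * X t) * U := by
            rw [Matrix.mul_assoc, Matrix.mul_assoc, Matrix.mul_assoc]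
        _ = (n t : ℝ) • (Uᵀ * (U * Matrix.diagonal (γ t) * Uᵀ) * U) := by
            rw [hM, Matrix.mul_smul, Matrix.smul_mul]
        _ = (n t : ℝ) • Matrix.diagonal (γ t) := by
            rw [← Matrix.mul_assoc, ← Matrix.mul_assoc, hU, Matrix.one_mul,
              Matrix.mul_assoc, hU, Matrix.mul_one]
    have hL : ∑ i, (X t * U) i j * (X t * U) i j' = ((X t * U)ᵀ * (X t * U)) j j' := by
      rw [Matrix.mul_apply]
      exact sum_congr rfl fun i _ => by rw [Matrix.transpose_apply]
    rw [hL, key]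
    simp [Matrix.diagonal_apply, Matrix.smul_apply, mul_ite]
  -- the recursion satisfied by the projected iterates
  have hrec : ∀ (t : Fin T) (ω : Ω) (j : Fin p),
      ∑ k, U k j * (what ((t : ℕ) + 1) ω k - wstar k)
        = (lam t j * (∑ k, U k j * (what (t : ℕ) ω k - wstar k))
            + (n t : ℝ)⁻¹ * ∑ i, (X t * U) i j * ε t ω i) / (γ t j + lam t j) := by
    intro t ω j
    set v : Fin p → ℝ := fun j => ∑ k, U k j * (what (t : ℕ) ω k - wstar k) with hv
    set xi : Fin p → ℝ := fun j => (n t : ℝ)⁻¹ * ∑ i, (X t * U) i j * ε t ω i with hxi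
    -- general expansion of the objective
    have hQ : ∀ w : Fin p → ℝ,
        (n t : ℝ)⁻¹ * ∑ i, (X t *ᵥ w - (X t *ᵥ wstar + ε t ω)) i ^ 2
          + (w - what (t : ℕ) ω) ⬝ᵥ
              ((U * Matrix.diagonal (lam t) * Uᵀ) *ᵥ (w - what (t : ℕ) ω))
        = (∑ j, ((γ t j + lam t j) * (∑ k, U k j * (w k - wstar k)) ^ 2
            - 2 * (xi j + lam t j * v j) * (∑ k, U k j * (w k - wstar k))
            + lam t j * v j ^ 2))
          + (n t : ℝ)⁻¹ * ∑ i, (ε t ω i) ^ 2 := by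
      intro w
      set z : Fin p → ℝ := fun j => ∑ k, U k j * (w k - wstar k) with hz
      have hzvec : z = Uᵀ *ᵥ (w - wstar) := by
        funext j; simp [hz, Matrix.mulVec, dotProduct, Matrix.transpose_apply]
      have hvvec : v = Uᵀ *ᵥ (what (t : ℕ) ω - wstar) := by
        funext j; simp [hv, Matrix.mulVec, dotProduct, Matrix.transpose_apply]
      -- first term
      have hres : X t *ᵥ w - (X t *ᵥ wstar + ε t ω) = (X t * U) *ᵥ z - ε t ω := by
        rw [hzvec, Matrix.mulVec_mulVec, Matrix.mul_assoc, hUUT, Matrix.mul_one,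
          Matrix.mulVec_sub]
        funext i
        simp
        try ring
      have hterm1 : ∑ i, (X t *ᵥ w - (X t *ᵥ wstar + ε t ω)) i ^ 2
          = (n t : ℝ) * ∑ j, γ t j * z j ^ 2
            - 2 * ∑ j, z j * ((n t : ℝ) * xi j)
            + ∑ i, (ε t ω i) ^ 2 := by
        rw [hres]
        have hsq : ∀ i, ((X t * U) *ᵥ z - ε t ω) i ^ 2
            = ((X t * U) *ᵥ z) i ^ 2 - 2 * (((X t * U) *ᵥ z) i * ε t ω i)
              + (ε t ω i) ^ 2 := by
          intro i; simp only [Pi.sub_apply]; ring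
        simp_rw [hsq]
        rw [Finset.sum_add_distrib, Finset.sum_sub_distrib, ← Finset.mul_sum]
        have e1 : ∑ i, ((X t * U) *ᵥ z) i ^ 2 = (n t : ℝ) * ∑ j, γ t j * z j ^ 2 := by
          have h3 := sum_sq_expand' (fun i j => (X t * U) i j) z (n t : ℝ) (γ t) (hXU t)
          simpa [Matrix.mulVec, dotProduct] using h3
        have e2 : ∑ i, ((X t * U) *ᵥ z) i * ε t ω i = ∑ j, z j * ((n t : ℝ) * xi j) := by
          have h4 := sum_mul_expand' (fun i j => (X t * U) i j) z (ε t ω)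
          simp only [Matrix.mulVec, dotProduct]
          rw [h4]
          refine sum_congr rfl fun j _ => ?_
          simp only [hxi]
          rw [← mul_assoc ((n t : ℝ)), mul_inv_cancel₀ (ne_of_gt (hnR t)), one_mul]
        rw [e1, e2]
      -- second term
      have hterm2 : (w - what (t : ℕ) ω) ⬝ᵥ
          ((U * Matrix.diagonal (lam t) * Uᵀ) *ᵥ (w - what (t : ℕ) ω))
          = ∑ j, lam t j * (z j - v j) ^ 2 := by
        set q : Fin p → ℝ := w - what (t : ℕ) ω with hq
        have hy : Uᵀ *ᵥ q = z - v := by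
          rw [hzvec, hvvec, ← Matrix.mulVec_sub]
          congr 1
          funext k
          simp [hq]
          try ring
        calc q ⬝ᵥ ((U * Matrix.diagonal (lam t) * Uᵀ) *ᵥ q)
            = q ⬝ᵥ (U *ᵥ (Matrix.diagonal (lam t) *ᵥ (Uᵀ *ᵥ q))) := by
              rw [Matrix.mulVec_mulVec, Matrix.mulVec_mulVec]
          _ = (Uᵀ *ᵥ q) ⬝ᵥ (Matrix.diagonal (lam t) *ᵥ (Uᵀ *ᵥ q)) := by
              rw [dotProduct_mulVec, Matrix.mulVec_transpose]
          _ = ∑ j, lam t j * (z j - v j) ^ 2 := by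
              rw [hy]
              simp only [dotProduct, Matrix.mulVec_diagonal, Pi.sub_apply]
              exact sum_congr rfl fun j _ => by ring
      rw [hterm2, hterm1]
      have e3 : (n t:ℝ)⁻¹ * ((n t:ℝ) * ∑ j, γ t j * z j ^ 2
            - 2 * ∑ j, z j * ((n t:ℝ) * xi j) + ∑ i, ε t ω i ^ 2)
          = ∑ j, γ t j * z j ^ 2 - 2 * ∑ j, z j * xi j
            + (n t:ℝ)⁻¹ * ∑ i, ε t ω i ^ 2 := by
        have h5 : ∑ j, z j * ((n t:ℝ) * xi j) = (n t:ℝ) * ∑ j, z j * xi j := by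
          rw [Finset.mul_sum]; exact sum_congr rfl fun j _ => by ring
        rw [h5]
        have hne : (n t : ℝ) ≠ 0 := ne_of_gt (hnR t)
        field_simp
      rw [e3]
      have e4 : ∑ j, γ t j * z j ^ 2 - 2 * ∑ j, z j * xi j + (n t:ℝ)⁻¹ * ∑ i, ε t ω i ^ 2
          + ∑ j, lam t j * (z j - v j) ^ 2
          = (∑ j, (γ t j * z j ^ 2 - 2 * (z j * xi j) + lam t j * (z j - v j) ^ 2))
            + (n t:ℝ)⁻¹ * ∑ i, ε t ω i ^ 2 := by
        rw [Finset.sum_add_distrib, Finset.sum_sub_distrib, Finset.mul_sum]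
        ring
      rw [e4]
      congr 1
      exact sum_congr rfl fun j _ => by ring
    -- apply optimality at the candidate minimizer
    set mv : Fin p → ℝ := fun j => (lam t j * v j + xi j) / (γ t j + lam t j) with hmv
    have hGLE := hmin t ω (wstar + U *ᵥ mv)
    rw [hQ _, hQ _] at hGLE
    have hzw0 : ∀ j, ∑ k, U k j * ((wstar + U *ᵥ mv) k - wstar k) = mv j := by
      intro j
      have h6 : ∀ k, (wstar + U *ᵥ mv) k - wstar k = (U *ᵥ mv) k := fun k => by
        simp
      simp_rw [h6]
      have h7 : ∑ k, U k j * (U *ᵥ mv) k = (Uᵀ *ᵥ (U *ᵥ mv)) j := by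
        simp [Matrix.mulVec, dotProduct, Matrix.transpose_apply]
      rw [h7, Matrix.mulVec_mulVec, hU, Matrix.one_mulVec]
    simp only [hzw0] at hGLE
    have hmj : ∀ j, (γ t j + lam t j) * mv j = lam t j * v j + xi j := fun j =>
      mul_div_cancel₀ _ (ne_of_gt (hcpos t j))
    have hdiff : ∀ j', (γ t j' + lam t j') *
          ((∑ k, U k j' * (what ((t : ℕ) + 1) ω k - wstar k)) - mv j') ^ 2
        = ((γ t j' + lam t j') * (∑ k, U k j' * (what ((t : ℕ) + 1) ω k - wstar k)) ^ 2
            - 2 * (xi j' + lam t j' * v j')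
              * (∑ k, U k j' * (what ((t : ℕ) + 1) ω k - wstar k))
            + lam t j' * v j' ^ 2)
          - ((γ t j' + lam t j') * mv j' ^ 2
            - 2 * (xi j' + lam t j' * v j') * mv j' + lam t j' * v j' ^ 2) := by
      intro j'
      linear_combination (-2 * ((∑ k, U k j' * (what ((t : ℕ) + 1) ω k - wstar k))
        - mv j')) * hmj j'
    have hsum0 : ∑ j', (γ t j' + lam t j') *
        ((∑ k, U k j' * (what ((t : ℕ) + 1) ω k - wstar k)) - mv j') ^ 2 ≤ 0 := by
      rw [show (∑ j', (γ t j' + lam t j') *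
          ((∑ k, U k j' * (what ((t : ℕ) + 1) ω k - wstar k)) - mv j') ^ 2)
        = (∑ j', ((γ t j' + lam t j')
              * (∑ k, U k j' * (what ((t : ℕ) + 1) ω k - wstar k)) ^ 2
            - 2 * (xi j' + lam t j' * v j')
              * (∑ k, U k j' * (what ((t : ℕ) + 1) ω k - wstar k))
            + lam t j' * v j' ^ 2))
          - (∑ j', ((γ t j' + lam t j') * mv j' ^ 2
            - 2 * (xi j' + lam t j' * v j') * mv j' + lam t j' * v j' ^ 2)) from by
          rw [← Finset.sum_sub_distrib]; exact sum_congr rfl fun j' _ => hdiff j']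
      linarith [hGLE]
    have hnonneg : ∀ j' ∈ (univ : Finset (Fin p)), (0:ℝ) ≤ (γ t j' + lam t j') *
        ((∑ k, U k j' * (what ((t : ℕ) + 1) ω k - wstar k)) - mv j') ^ 2 :=
      fun j' _ => mul_nonneg (le_of_lt (hcpos t j')) (sq_nonneg _)
    have hzero := (Finset.sum_eq_zero_iff_of_nonneg hnonneg).mp
      (le_antisymm hsum0 (Finset.sum_nonneg hnonneg)) j (mem_univ j)
    have h8 : (∑ k, U k j * (what ((t : ℕ) + 1) ω k - wstar k)) - mv j = 0 := by
      rcases mul_eq_zero.mp hzero with h | h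
      · exact absurd h (ne_of_gt (hcpos t j))
      · exact (pow_eq_zero_iff (two_ne_zero)).mp h
    have h9 := sub_eq_zero.mp h8
    rw [h9, hmv]
  -- ============ probabilistic part ============
  have hξmem : ∀ (t : Fin T) (j : Fin p),
      MemLp (fun ω => (n t:ℝ)⁻¹ * ∑ i, (X t * U) i j * ε t ω i) 2 μ := fun t j =>
    (memLp_finset_sum univ (fun i _ => (hεL2 t i).const_mul ((X t * U) i j))).const_mul _
  have hεint : ∀ t i, Integrable (fun ω => ε t ω i) μ := fun t i =>
    (hεL2 t i).integrable one_le_two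
  have hξint0 : ∀ t j, ∫ ω, (n t:ℝ)⁻¹ * ∑ i, (X t * U) i j * ε t ω i ∂μ = 0 := by
    intro t j
    rw [integral_const_mul,
      integral_finset_sum univ (fun i _ => (hεint t i).const_mul _)]
    have hz : ∀ i : Fin (n t), ∫ ω, (X t * U) i j * ε t ω i ∂μ = 0 := fun i => by
      rw [integral_const_mul, hmean, mul_zero]
    simp [hz]
  have hcross : ∀ (t τ : Fin T), t ≠ τ → ∀ i i', ∫ ω, ε t ω i * ε τ ω i' ∂μ = 0 := by
    intro t τ hne i i'
    have hif : IndepFun (fun ω => ε t ω i) (fun ω => ε τ ω i') μ :=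
      (hindep.indepFun hne).comp (measurable_pi_apply i) (measurable_pi_apply i')
    have h := hif.integral_fun_mul_eq_mul_integral (hεL2 t i).aestronglyMeasurable
      (hεL2 τ i').aestronglyMeasurable
    calc ∫ ω, ε t ω i * ε τ ω i' ∂μ
        = (∫ ω, ε t ω i ∂μ) * ∫ ω, ε τ ω i' ∂μ := h
      _ = 0 := by rw [hmean, hmean, mul_zero]
  have hξξ : ∀ (t τ : Fin T), t ≠ τ → ∀ j,
      ∫ ω, ((n t:ℝ)⁻¹ * ∑ i, (X t * U) i j * ε t ω i)
        * ((n τ:ℝ)⁻¹ * ∑ i, (X τ * U) i j * ε τ ω i) ∂μ = 0 := by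
    intro t τ hne j
    have hre : ∀ ω, ((n t:ℝ)⁻¹ * ∑ i, (X t * U) i j * ε t ω i)
          * ((n τ:ℝ)⁻¹ * ∑ i, (X τ * U) i j * ε τ ω i)
        = (n t:ℝ)⁻¹ * ((n τ:ℝ)⁻¹ * ∑ i, ∑ i',
            ((X t * U) i j * (X τ * U) i' j) * (ε t ω i * ε τ ω i')) := by
      intro ω
      have hSS : (∑ i, (X t * U) i j * ε t ω i) * (∑ i', (X τ * U) i' j * ε τ ω i')
          = ∑ i, ∑ i', ((X t * U) i j * (X τ * U) i' j) * (ε t ω i * ε τ ω i') := by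
        rw [Finset.sum_mul_sum]
        exact sum_congr rfl fun i _ => sum_congr rfl fun i' _ => by ring
      rw [← hSS]; ring
    simp_rw [hre]
    rw [integral_const_mul, integral_const_mul,
      integral_finset_sum univ (fun i _ => integrable_finset_sum univ
        (fun i' _ => (integrable_mul_of_memL2 (hεL2 t i) (hεL2 τ i')).const_mul _))]
    have hz : ∀ i : Fin (n t), ∑ i', ∫ ω,
        ((X t * U) i j * (X τ * U) i' j) * (ε t ω i * ε τ ω i') ∂μ = 0 := by
      intro i
      refine Finset.sum_eq_zero fun i' _ => ?_
      rw [integral_const_mul, hcross t τ hne i i', mul_zero]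
    have hsum : ∀ i : Fin (n t), ∫ ω, ∑ i',
        ((X t * U) i j * (X τ * U) i' j) * (ε t ω i * ε τ ω i') ∂μ = 0 := by
      intro i
      rw [integral_finset_sum univ
        (fun i' _ => (integrable_mul_of_memL2 (hεL2 t i) (hεL2 τ i')).const_mul _)]
      exact hz i
    simp [hsum]
  have hξsq : ∀ (t : Fin T) (j : Fin p),
      ∫ ω, ((n t:ℝ)⁻¹ * ∑ i, (X t * U) i j * ε t ω i) ^ 2 ∂μ
        = σ2 * γ t j / n t := by
    intro t j
    have hre : ∀ ω, ((n t:ℝ)⁻¹ * ∑ i, (X t * U) i j * ε t ω i) ^ 2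
        = (n t:ℝ)⁻¹ * ((n t:ℝ)⁻¹ * ∑ i, ∑ i',
            ((X t * U) i j * (X t * U) i' j) * (ε t ω i * ε t ω i')) := by
      intro ω
      have hSS : (∑ i, (X t * U) i j * ε t ω i) * (∑ i', (X t * U) i' j * ε t ω i')
          = ∑ i, ∑ i', ((X t * U) i j * (X t * U) i' j) * (ε t ω i * ε t ω i') := by
        rw [Finset.sum_mul_sum]
        exact sum_congr rfl fun i _ => sum_congr rfl fun i' _ => by ring
      rw [← hSS]; ring
    simp_rw [hre]
    rw [integral_const_mul, integral_const_mul,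
      integral_finset_sum univ (fun i _ => integrable_finset_sum univ
        (fun i' _ => (integrable_mul_of_memL2 (hεL2 t i) (hεL2 t i')).const_mul _))]
    have hsum : ∀ i : Fin (n t), ∫ ω, ∑ i',
        ((X t * U) i j * (X t * U) i' j) * (ε t ω i * ε t ω i') ∂μ
        = (X t * U) i j * (X t * U) i j * σ2 := by
      intro i
      rw [integral_finset_sum univ
        (fun i' _ => (integrable_mul_of_memL2 (hεL2 t i) (hεL2 t i')).const_mul _)]
      have hterm : ∀ i' : Fin (n t), ∫ ω,
          ((X t * U) i j * (X t * U) i' j) * (ε t ω i * ε t ω i') ∂μ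
          = ((X t * U) i j * (X t * U) i' j) * (if i = i' then σ2 else 0) := by
        intro i'
        rw [integral_const_mul, hcov t i i']
      simp_rw [hterm]
      simp [mul_ite, mul_zero, Finset.sum_ite_eq]
    simp_rw [hsum]
    rw [← Finset.sum_mul, hXU t j j]
    simp only [if_true]
    have hne : (n t : ℝ) ≠ 0 := ne_of_gt (hnR t)
    field_simp
  -- ============ the induction ============
  have key : ∀ m : ℕ, m ≤ T → ∀ j : Fin p,
      MemLp (fun ω => ∑ k, U k j * (what m ω k - wstar k)) 2 μ
    ∧ (∀ t : Fin T, m ≤ (t:ℕ) →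
        ∫ ω, ((n t:ℝ)⁻¹ * ∑ i, (X t * U) i j * ε t ω i)
          * (∑ k, U k j * (what m ω k - wstar k)) ∂μ = 0)
    ∧ ∫ ω, (∑ k, U k j * (what m ω k - wstar k)) ^ 2 ∂μ
        = σ2 / (σ2 / (∑ k, U k j * wstar k) ^ 2
            + ∑ τ ∈ univ.filter (fun τ : Fin T => (τ:ℕ) < m), γ τ j * (n τ : ℝ)) := by
    intro m
    induction m with
    | zero =>
      intro _ j
      have hc : ∀ ω : Ω, ∑ k, U k j * (what 0 ω k - wstar k)
          = -(∑ k, U k j * wstar k) := by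
        intro ω
        rw [h0]
        simp [Finset.sum_neg_distrib]
      refine ⟨?_, ?_, ?_⟩
      · rw [show (fun ω => ∑ k, U k j * (what 0 ω k - wstar k))
            = fun _ : Ω => -(∑ k, U k j * wstar k) from funext hc]
        exact memLp_const _
      · intro t _
        simp_rw [hc]
        rw [integral_mul_const, hξint0 t j, zero_mul]
      · simp_rw [hc]
        rw [integral_const]
        simp only [probReal_univ, one_smul]
        rw [show (univ.filter fun τ : Fin T => (τ:ℕ) < 0) = (∅ : Finset (Fin T))
          from by simp]
        rw [Finset.sum_empty, add_zero]
        have hdd : σ2 / (σ2 / (∑ k, U k j * wstar k) ^ 2)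
            = (∑ k, U k j * wstar k) ^ 2 := by
          rw [div_div_eq_mul_div, mul_comm, mul_div_assoc,
            div_self (ne_of_gt hσ2), mul_one]
        rw [hdd]
        ring
    | succ m ih =>
      intro hm1 j
      have hmT : m < T := lt_of_lt_of_le (Nat.lt_succ_self m) hm1
      obtain ⟨ihmem, ihorth, ihsq⟩ := ih (le_of_lt hmT) j
      set t₀ : Fin T := ⟨m, hmT⟩ with ht₀
      have hrec0 : ∀ ω, ∑ k, U k j * (what (m+1) ω k - wstar k)
          = (lam t₀ j * (∑ k, U k j * (what m ω k - wstar k))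
              + (n t₀:ℝ)⁻¹ * ∑ i, (X t₀ * U) i j * ε t₀ ω i)
            / (γ t₀ j + lam t₀ j) := fun ω => hrec t₀ ω j
      have hcne : (γ t₀ j + lam t₀ j) ≠ 0 := ne_of_gt (hcpos t₀ j)
      refine ⟨?_, ?_, ?_⟩
      · rw [show (fun ω => ∑ k, U k j * (what (m+1) ω k - wstar k))
            = fun ω => (γ t₀ j + lam t₀ j)⁻¹
                * (lam t₀ j * (∑ k, U k j * (what m ω k - wstar k))
                  + (n t₀:ℝ)⁻¹ * ∑ i, (X t₀ * U) i j * ε t₀ ω i) from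
          funext fun ω => by rw [hrec0 ω, div_eq_mul_inv, mul_comm]]
        exact ((ihmem.const_mul _).add (hξmem t₀ j)).const_mul _
      · intro t ht
        have htne : t ≠ t₀ := by
          intro h
          rw [h] at ht
          simp only [ht₀] at ht
          omega
        have hintVm : Integrable (fun ω =>
            ((n t:ℝ)⁻¹ * ∑ i, (X t * U) i j * ε t ω i)
            * (∑ k, U k j * (what m ω k - wstar k))) μ :=
          integrable_mul_of_memL2 (hξmem t j) ihmem
        have hintξξ : Integrable (fun ω =>
            ((n t:ℝ)⁻¹ * ∑ i, (X t * U) i j * ε t ω i)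
            * ((n t₀:ℝ)⁻¹ * ∑ i, (X t₀ * U) i j * ε t₀ ω i)) μ :=
          integrable_mul_of_memL2 (hξmem t j) (hξmem t₀ j)
        have hre : ∀ ω, ((n t:ℝ)⁻¹ * ∑ i, (X t * U) i j * ε t ω i)
              * (∑ k, U k j * (what (m+1) ω k - wstar k))
            = (γ t₀ j + lam t₀ j)⁻¹
              * (lam t₀ j * (((n t:ℝ)⁻¹ * ∑ i, (X t * U) i j * ε t ω i)
                    * (∑ k, U k j * (what m ω k - wstar k)))
                + ((n t:ℝ)⁻¹ * ∑ i, (X t * U) i j * ε t ω i)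
                    * ((n t₀:ℝ)⁻¹ * ∑ i, (X t₀ * U) i j * ε t₀ ω i)) := by
          intro ω
          rw [hrec0 ω]
          ring
        simp_rw [hre]
        rw [integral_const_mul, integral_add (hintVm.const_mul _) hintξξ,
          integral_const_mul, ihorth t (Nat.le_of_succ_le ht), hξξ t t₀ htne j]
        simp
      · have hi1 : Integrable (fun ω => (∑ k, U k j * (what m ω k - wstar k)) ^ 2) μ := by
          simpa only [pow_two] using integrable_mul_of_memL2 ihmem ihmem
        have hi2 : Integrable (fun ω =>
            ((n t₀:ℝ)⁻¹ * ∑ i, (X t₀ * U) i j * ε t₀ ω i)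
            * (∑ k, U k j * (what m ω k - wstar k))) μ :=
          integrable_mul_of_memL2 (hξmem t₀ j) ihmem
        have hi3 : Integrable (fun ω =>
            ((n t₀:ℝ)⁻¹ * ∑ i, (X t₀ * U) i j * ε t₀ ω i) ^ 2) μ := by
          simpa only [pow_two] using integrable_mul_of_memL2 (hξmem t₀ j) (hξmem t₀ j)
        have hre2 : ∀ ω, (∑ k, U k j * (what (m+1) ω k - wstar k)) ^ 2
            = ((γ t₀ j + lam t₀ j)⁻¹) ^ 2
              * ((lam t₀ j) ^ 2 * (∑ k, U k j * (what m ω k - wstar k)) ^ 2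
                + (2 * lam t₀ j * (((n t₀:ℝ)⁻¹ * ∑ i, (X t₀ * U) i j * ε t₀ ω i)
                      * (∑ k, U k j * (what m ω k - wstar k)))
                  + ((n t₀:ℝ)⁻¹ * ∑ i, (X t₀ * U) i j * ε t₀ ω i) ^ 2)) := by
          intro ω
          rw [hrec0 ω]
          ring
        have hi23 : Integrable (fun ω =>
            2 * lam t₀ j * (((n t₀:ℝ)⁻¹ * ∑ i, (X t₀ * U) i j * ε t₀ ω i)
                * (∑ k, U k j * (what m ω k - wstar k)))
              + ((n t₀:ℝ)⁻¹ * ∑ i, (X t₀ * U) i j * ε t₀ ω i) ^ 2) μ := by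
          exact (hi2.const_mul _).add hi3
        simp_rw [hre2]
        rw [integral_const_mul, integral_add (hi1.const_mul _) hi23,
          integral_add (hi2.const_mul _) hi3, integral_const_mul, integral_const_mul,
          ihsq, ihorth t₀ le_rfl, hξsq t₀ j]
        -- algebra
        have hSpos : 0 < σ2 / (∑ k, U k j * wstar k) ^ 2
            + ∑ τ ∈ univ.filter (fun τ : Fin T => (τ:ℕ) < m), γ τ j * (n τ : ℝ) :=
          add_pos_of_pos_of_nonneg (div_pos hσ2 (he0 j))
            (Finset.sum_nonneg fun τ _ => mul_nonneg (hγ τ j) (Nat.cast_nonneg _))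
        have hfilt : univ.filter (fun τ : Fin T => τ < t₀)
            = univ.filter (fun τ : Fin T => (τ:ℕ) < m) := by
          apply Finset.filter_congr
          intro τ _
          exact Fin.lt_def
        have hlam0 : lam t₀ j = (σ2 / (∑ k, U k j * wstar k) ^ 2
            + ∑ τ ∈ univ.filter (fun τ : Fin T => (τ:ℕ) < m), γ τ j * (n τ : ℝ))
              / (n t₀ : ℝ) := by
          rw [hlam t₀ j, hfilt]
        have hins : univ.filter (fun τ : Fin T => (τ:ℕ) < m+1)
            = insert t₀ (univ.filter fun τ : Fin T => (τ:ℕ) < m) := by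
          ext τ
          simp only [mem_filter, mem_univ, true_and, mem_insert, Fin.ext_iff, ht₀,
            Nat.lt_succ_iff_lt_or_eq]
          tauto
        have hstep : σ2 / (∑ k, U k j * wstar k) ^ 2
            + ∑ τ ∈ univ.filter (fun τ : Fin T => (τ:ℕ) < m+1), γ τ j * (n τ : ℝ)
            = (σ2 / (∑ k, U k j * wstar k) ^ 2
              + ∑ τ ∈ univ.filter (fun τ : Fin T => (τ:ℕ) < m), γ τ j * (n τ : ℝ))
              + γ t₀ j * (n t₀ : ℝ) := by
          rw [hins, Finset.sum_insert (by simp; exact le_rfl)]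
          ring
        rw [hstep, hlam0]
        exact rate_step' σ2 _ _ _ hSpos (hnR t₀) (hγ t₀ j)
  -- ============ conclusion ============
  have hfirst : ∀ (t : Fin T) (j : Fin p),
      ∫ ω, (∑ k, U k j * (what ((t : ℕ) + 1) ω k - wstar k)) ^ 2 ∂μ
        = σ2 / (σ2 / (∑ k, U k j * wstar k) ^ 2
            + ∑ τ ∈ Finset.univ.filter (fun τ => τ ≤ t), γ τ j * n τ) := by
    intro t j
    have h := (key ((t:ℕ)+1) (Nat.succ_le_of_lt t.isLt) j).2.2
    rw [h]
    have hfe : univ.filter (fun τ : Fin T => (τ:ℕ) < (t:ℕ)+1)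
        = univ.filter (fun τ : Fin T => τ ≤ t) := by
      apply Finset.filter_congr
      intro τ _
      rw [Nat.lt_succ_iff]
      exact Fin.le_def.symm
    rw [hfe]
  refine ⟨hfirst, ?_⟩
  intro t
  have horthrow : ∀ k k', ∑ j, U k j * U k' j = (1:ℝ) * (if k = k' then 1 else 0) := by
    intro k k'
    have h := congrFun (congrFun hUUT k) k'
    rw [Matrix.mul_apply] at h
    rw [one_mul]
    calc ∑ j, U k j * U k' j = ∑ j, U k j * Uᵀ j k' := by
          exact sum_congr rfl fun j _ => by rw [Matrix.transpose_apply]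
      _ = (1 : Matrix (Fin p) (Fin p) ℝ) k k' := h
      _ = if k = k' then 1 else 0 := by rw [Matrix.one_apply]
  have hPar : ∀ ω, ∑ j, (what ((t : ℕ) + 1) ω j - wstar j) ^ 2
      = ∑ j, (∑ k, U k j * (what ((t : ℕ) + 1) ω k - wstar k)) ^ 2 := by
    intro ω
    have h := sum_sq_expand' (fun j k => U k j)
      (fun k => what ((t : ℕ) + 1) ω k - wstar k) 1 (fun _ => 1) horthrow
    rw [h]
    simp
  simp_rw [hPar]
  rw [integral_finset_sum univ (fun j _ =>
    ((key ((t:ℕ)+1) (Nat.succ_le_of_lt t.isLt) j).1).integrable_sq)]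
  exact sum_congr rfl fun j _ => hfirst t j
end

section
/- (Key inequality for robustness to approximate weights, Theorem 4.3.) For all real numbers C > 1, ρ > 0, and x with x² ≤ C (C−1) ρ² / ( (1+ρ)(1+Cρ)² ), one has C/(1+Cρ) + x² (C + 1/ρ) ≤ C/(1+ρ). -/
/-- **Key inequality for robustness to approximate weights,
Theorem 4.3.** For all reals `C > 1`, `ρ > 0`, and `x` with
`x² ≤ C(C−1)ρ² / ((1+ρ)(1+Cρ)²)`, one has
`C/(1+Cρ) + x²(C + 1/ρ) ≤ C/(1+ρ)`. -/
theorem approx_weights_key_inequality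
    (C ρ x : ℝ) (hC : 1 < C) (hρ : 0 < ρ)
    (hx : x ^ 2 ≤ C * (C - 1) * ρ ^ 2 / ((1 + ρ) * (1 + C * ρ) ^ 2)) :
    C / (1 + C * ρ) + x ^ 2 * (C + 1 / ρ) ≤ C / (1 + ρ) := by
  have h1 : (0:ℝ) < 1 + ρ := by linarith
  have h2 : (0:ℝ) < 1 + C * ρ := by nlinarith
  have hden : (0:ℝ) < (1 + ρ) * (1 + C * ρ) ^ 2 := by positivity
  rw [le_div_iff₀ hden] at hx
  have key : C / (1 + ρ) - C / (1 + C * ρ) = C * (C - 1) * ρ / ((1 + ρ) * (1 + C * ρ)) := by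
    field_simp
    ring
  have h3 : x ^ 2 * (C + 1 / ρ) = x ^ 2 * (1 + C * ρ) / ρ := by
    field_simp
    ring_nf
  have h4 : x ^ 2 * (1 + C * ρ) / ρ ≤ C * (C - 1) * ρ / ((1 + ρ) * (1 + C * ρ)) := by
    rw [div_le_div_iff₀ hρ (mul_pos h1 h2)]
    nlinarith [sq_nonneg x, mul_pos h1 h2]
  linarith [h3 ▸ h4, key ▸ h4]
end

section
/- (One-step robustness of the error recursion to approximate regularization, Theorem 4.3.) Let e, γ, n, σ², D be positive reals and C > 1 with e ≤ C σ² / D. Set ρ := γ n / D, and let Δ ∈ ℝ satisfy (γ Δ)² ≤ C (C−1) ρ² / ( (1+ρ)(1+Cρ)² ). Define z := e/(γ e + σ²/n) + Δ. Then e − 2 γ e z + (γ² e + γ σ²/n) z² ≤ C σ² / (D + γ n). (Interpretation: if the previous projected estimation error is at most Cσ²/D and the regularization strength λ̃ satisfies 1/(λ̃ + γ) = e/(γe + σ²/n) + Δ, then the updated projected error of the generalized ℓ₂-regularized estimator is at most Cσ²/(D + γn).) -/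
set_option maxHeartbeats 800000 in
private lemma heq_aux (γ n σ2 D C : ℝ) (hγ : 0 < γ) (hn : 0 < n) (hσ2 : 0 < σ2)
    (hD : 0 < D) (hC0 : 0 < C) :
    C * σ2 / D * (σ2 / n) / (γ * (C * σ2 / D) + σ2 / n)
      + (γ * (C * σ2 / D) + σ2 / n) / γ
          * (C * (C - 1) * (γ * n / D) ^ 2
              / ((1 + γ * n / D) * (1 + C * (γ * n / D)) ^ 2))
    = C * σ2 / (D + γ * n) := by
  have h1 : γ * (C * σ2 / D) + σ2 / n = σ2 / n * (1 + C * (γ * n / D)) := by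
    field_simp; ring
  have h2 : (0:ℝ) < 1 + γ * n / D := by positivity
  have h3 : (0:ℝ) < 1 + C * (γ * n / D) := by positivity
  rw [h1]
  field_simp
  ring

/-- **One-step robustness of the error recursion to approximate
regularization, Theorem 4.3.** Let `e, γ, n, σ², D > 0` and `C > 1` with
`e ≤ Cσ²/D`; set `ρ = γn/D` and let `Δ` satisfy
`(γΔ)² ≤ C(C−1)ρ²/((1+ρ)(1+Cρ)²)`. With `z = e/(γe + σ²/n) + Δ`, the updated
projected error satisfies
`e − 2γez + (γ²e + γσ²/n) z² ≤ Cσ²/(D + γn)`. -/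
theorem approx_regularization_one_step
    (e γ n σ2 D C : ℝ)
    (he : 0 < e) (hγ : 0 < γ) (hn : 0 < n) (hσ2 : 0 < σ2) (hD : 0 < D)
    (hC : 1 < C)
    (hbound : e ≤ C * σ2 / D)
    (Δ : ℝ)
    (hΔ : (γ * Δ) ^ 2
      ≤ C * (C - 1) * (γ * n / D) ^ 2
          / ((1 + γ * n / D) * (1 + C * (γ * n / D)) ^ 2)) :
    e - 2 * γ * e * (e / (γ * e + σ2 / n) + Δ)
        + (γ ^ 2 * e + γ * σ2 / n) * (e / (γ * e + σ2 / n) + Δ) ^ 2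
      ≤ C * σ2 / (D + γ * n) := by
  have hC0 : (0:ℝ) < C := lt_trans one_pos hC
  have hs0 : 0 < σ2 / n := div_pos hσ2 hn
  have hA0 : 0 < γ * e + σ2 / n := by positivity
  have he00 : (0:ℝ) < C * σ2 / D := by positivity
  have hA00 : (0:ℝ) < γ * (C * σ2 / D) + σ2 / n := by positivity
  -- Step 1: LHS = e*(σ2/n)/(γe+σ2/n) + γ*(γe+σ2/n)*Δ^2
  have hkey : e - 2 * γ * e * (e / (γ * e + σ2 / n) + Δ)
        + (γ ^ 2 * e + γ * σ2 / n) * (e / (γ * e + σ2 / n) + Δ) ^ 2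
      = e * (σ2 / n) / (γ * e + σ2 / n) + γ * (γ * e + σ2 / n) * Δ ^ 2 := by
    field_simp
    ring
  rw [hkey]
  -- Step 2: monotonicity in e of the first term
  have h2 : e * (σ2 / n) / (γ * e + σ2 / n)
      ≤ C * σ2 / D * (σ2 / n) / (γ * (C * σ2 / D) + σ2 / n) := by
    rw [div_le_div_iff₀ hA0 hA00]
    nlinarith [mul_pos hs0 hs0, mul_le_mul_of_nonneg_right hbound
      (le_of_lt (mul_pos hs0 hs0))]
  -- Step 3: monotonicity of the Δ² term and the Δ bound
  have hAle : γ * e + σ2 / n ≤ γ * (C * σ2 / D) + σ2 / n := by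
    have : γ * e ≤ γ * (C * σ2 / D) := by nlinarith
    linarith
  have h3 : γ * (γ * e + σ2 / n) * Δ ^ 2
      ≤ (γ * (C * σ2 / D) + σ2 / n) / γ
          * (C * (C - 1) * (γ * n / D) ^ 2
              / ((1 + γ * n / D) * (1 + C * (γ * n / D)) ^ 2)) := by
    have hstep : γ * (γ * e + σ2 / n) * Δ ^ 2
        ≤ γ * (γ * (C * σ2 / D) + σ2 / n) * Δ ^ 2 := by
      nlinarith [sq_nonneg Δ]
    refine le_trans hstep ?_
    have hb : γ ^ 2 * Δ ^ 2
        ≤ C * (C - 1) * (γ * n / D) ^ 2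
            / ((1 + γ * n / D) * (1 + C * (γ * n / D)) ^ 2) := by
      calc γ ^ 2 * Δ ^ 2 = (γ * Δ) ^ 2 := by ring
        _ ≤ _ := hΔ
    have hq : γ * (γ * (C * σ2 / D) + σ2 / n) * Δ ^ 2
        = (γ * (C * σ2 / D) + σ2 / n) / γ * (γ ^ 2 * Δ ^ 2) := by
      field_simp
    rw [hq]
    exact mul_le_mul_of_nonneg_left hb (le_of_lt (div_pos hA00 hγ))
  have heq := heq_aux γ n σ2 D C hγ hn hσ2 hD hC0
  linarith
end

section
/- (Equivalence of early stopping and generalized ℓ₂-regularization, Theorem 5.1.) For each task t, suppose Σ_t = U_t Γ_t U_tᵀ with U_t orthogonal and Γ_t = diag(γ_1^{(t)},…,γ_p^{(t)}) positive definite; let A_t = U_t S_t U_tᵀ with S_t = diag(s_1^{(t)},…,s_p^{(t)}) satisfying 0 < s_j^{(t)} γ_j^{(t)} < 1, let m_t ≥ 1 be an integer, and define H_t := U_t Λ_t U_tᵀ with λ_j^{(t)} = γ_j^{(t)} (1 − s_j^{(t)} γ_j^{(t)})^{m_t} / ( 1 − (1 − s_j^{(t)} γ_j^{(t)})^{m_t}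 ). Define the early stopping (ES) estimator by ŵ_0^{ES} = 0 and, at task t, setting w^{(0)} = ŵ_{t−1}^{ES}, iterating w^{(τ)} = w^{(τ−1)} − (A_t/n_t) X_tᵀ ( X_t w^{(τ−1)} − y_t ) for τ = 1,…,m_t, and setting ŵ_t^{ES} = w^{(m_t)}. Then for every t ∈ [T], ŵ_t^{ES} = ŵ_t^{GR}, where ŵ^{GR} is the generalized ℓ₂-regularized estimator with regularization weight matrices H_t. -/
open Matrix


section helpers
variable {p : ℕ} (Q : Matrix (Fin p) (Fin p) ℝ)

lemma Dmul (hQ : Qᵀ * Q = 1) (d e : Fin p → ℝ) :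
    (Q * diagonal d * Qᵀ) * (Q * diagonal e * Qᵀ)
      = Q * diagonal (fun j => d j * e j) * Qᵀ := by
  have h1 : ∀ Z : Matrix (Fin p) (Fin p) ℝ, Qᵀ * (Q * Z) = Z := by
    intro Z; rw [← Matrix.mul_assoc, hQ, Matrix.one_mul]
  simp only [Matrix.mul_assoc]
  rw [h1, ← Matrix.mul_assoc (diagonal d), diagonal_mul_diagonal]

lemma Dvec (hQ : Qᵀ * Q = 1) (d e : Fin p → ℝ) (v : Fin p → ℝ) :
    (Q * diagonal d * Qᵀ) *ᵥ ((Q * diagonal e * Qᵀ) *ᵥ v)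
      = (Q * diagonal (fun j => d j * e j) * Qᵀ) *ᵥ v := by
  rw [mulVec_mulVec, Dmul Q hQ]

lemma Dadd (d e : Fin p → ℝ) :
    (Q * diagonal d * Qᵀ) + (Q * diagonal e * Qᵀ)
      = Q * diagonal (fun j => d j + e j) * Qᵀ := by
  rw [← Matrix.add_mul, ← Matrix.mul_add, diagonal_add]

lemma Dsub (d e : Fin p → ℝ) :
    (Q * diagonal d * Qᵀ) - (Q * diagonal e * Qᵀ)
      = Q * diagonal (fun j => d j - e j) * Qᵀ := by
  rw [← Matrix.sub_mul, ← Matrix.mul_sub, diagonal_sub]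

lemma Done (hQQ : Q * Qᵀ = 1) :
    Q * diagonal (fun _ : Fin p => (1:ℝ)) * Qᵀ = 1 := by
  have : diagonal (fun _ : Fin p => (1:ℝ)) = 1 := Matrix.diagonal_one
  rw [this, Matrix.mul_one, hQQ]

lemma Dposdef (hQQ : Q * Qᵀ = 1) (d : Fin p → ℝ) (hd : ∀ j, 0 < d j)
    (v : Fin p → ℝ) (h : v ⬝ᵥ (Q * diagonal d * Qᵀ) *ᵥ v ≤ 0) : v = 0 := by
  set c := Qᵀ *ᵥ v with hc
  have hquad : v ⬝ᵥ (Q * diagonal d * Qᵀ) *ᵥ v = ∑ j, d j * c j ^ 2 := by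
    rw [← mulVec_mulVec, ← mulVec_mulVec, dotProduct_mulVec, ← mulVec_transpose, ← hc]
    simp only [dotProduct, mulVec_diagonal]
    exact Finset.sum_congr rfl fun j _ => by ring
  rw [hquad] at h
  have hc0 : c = 0 := by
    funext j
    by_contra hj
    have h2 : 0 < c j ^ 2 := lt_of_le_of_ne (sq_nonneg _) (Ne.symm (pow_ne_zero 2 hj))
    have hpos : 0 < ∑ j, d j * c j ^ 2 :=
      Finset.sum_pos' (fun i _ => mul_nonneg (hd i).le (sq_nonneg _))
        ⟨j, Finset.mem_univ j, mul_pos (hd j) h2⟩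
    linarith
  have hv : Q *ᵥ c = v := by rw [hc, mulVec_mulVec, hQQ, one_mulVec]
  rw [hc0, mulVec_zero] at hv
  exact hv.symm

end helpers
lemma iter_closed {p : ℕ} (Q : Matrix (Fin p) (Fin p) ℝ)
    (hQ : Qᵀ * Q = 1) (hQQ : Q * Qᵀ = 1)
    (γ s : Fin p → ℝ) (hγ : ∀ j, γ j ≠ 0)
    (b w0 : Fin p → ℝ) (g : ℕ → Fin p → ℝ) (hg0 : g 0 = w0)
    (hgrec : ∀ τ, g (τ + 1)
      = g τ - (Q * diagonal s * Qᵀ) *ᵥ ((Q * diagonal γ * Qᵀ) *ᵥ g τ - b)) :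
    ∀ τ, g τ = (Q * diagonal (fun j => (γ j)⁻¹) * Qᵀ) *ᵥ b
      + (Q * diagonal (fun j => (1 - s j * γ j) ^ τ) * Qᵀ) *ᵥ
          (w0 - (Q * diagonal (fun j => (γ j)⁻¹) * Qᵀ) *ᵥ b) := by
  set wbar := (Q * diagonal (fun j => (γ j)⁻¹) * Qᵀ) *ᵥ b with hwbar
  have hbar : (Q * diagonal γ * Qᵀ) *ᵥ wbar = b := by
    rw [hwbar, Dvec Q hQ]
    have h1 : (fun j => γ j * (γ j)⁻¹) = fun _ : Fin p => (1:ℝ) := by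
      funext j; exact mul_inv_cancel₀ (hγ j)
    rw [h1, Done Q hQQ, one_mulVec]
  intro τ
  induction τ with
  | zero =>
    simp only [pow_zero]
    rw [Done Q hQQ, one_mulVec, hg0]
    abel
  | succ τ ihτ =>
    rw [hgrec τ, ihτ]
    set u := w0 - wbar with hu
    have h1 : (Q * diagonal γ * Qᵀ) *ᵥ
          (wbar + (Q * diagonal (fun j => (1 - s j * γ j) ^ τ) * Qᵀ) *ᵥ u) - b
        = (Q * diagonal (fun j => γ j * (1 - s j * γ j) ^ τ) * Qᵀ) *ᵥ u := by
      rw [mulVec_add, hbar, Dvec Q hQ]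
      abel
    rw [h1, Dvec Q hQ]
    have h2 : (Q * diagonal (fun j => (1 - s j * γ j) ^ τ) * Qᵀ) *ᵥ u
        - (Q * diagonal (fun j => s j * (γ j * (1 - s j * γ j) ^ τ)) * Qᵀ) *ᵥ u
        = (Q * diagonal (fun j => (1 - s j * γ j) ^ (τ + 1)) * Qᵀ) *ᵥ u := by
      rw [← sub_mulVec, Dsub Q]
      have hfun : (fun j => (1 - s j * γ j) ^ τ - s j * (γ j * (1 - s j * γ j) ^ τ))
          = fun j => (1 - s j * γ j) ^ (τ + 1) := by
        funext j; ring
      rw [hfun]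
    rw [add_sub_assoc, h2]

lemma quad_expand {p : ℕ} (H : Matrix (Fin p) (Fin p) ℝ) (hH : Hᵀ = H) (u v : Fin p → ℝ) :
    (u + v) ⬝ᵥ H *ᵥ (u + v)
      = u ⬝ᵥ H *ᵥ u + 2 * (u ⬝ᵥ H *ᵥ v) + v ⬝ᵥ H *ᵥ v := by
  have hsym : v ⬝ᵥ H *ᵥ u = u ⬝ᵥ H *ᵥ v := by
    rw [dotProduct_mulVec, ← mulVec_transpose, hH, dotProduct_comm]
  simp only [mulVec_add, dotProduct_add, add_dotProduct, hsym]
  ring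

lemma argmin_eq {p n : ℕ}
    (X : Matrix (Fin n) (Fin p) ℝ) (y : Fin n → ℝ)
    (H : Matrix (Fin p) (Fin p) ℝ) (hH : Hᵀ = H)
    (hMpd : ∀ v : Fin p → ℝ,
      v ⬝ᵥ ((n:ℝ)⁻¹ • (Xᵀ * X) + H) *ᵥ v ≤ 0 → v = 0)
    (wp what w2 : Fin p → ℝ)
    (hstat : ((n:ℝ)⁻¹ • (Xᵀ * X)) *ᵥ what + H *ᵥ (what - wp)
      = (n:ℝ)⁻¹ • (Xᵀ *ᵥ y))
    (hmin : (n:ℝ)⁻¹ * ∑ i, (X *ᵥ w2 - y) i ^ 2 + (w2 - wp) ⬝ᵥ H *ᵥ (w2 - wp)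
        ≤ (n:ℝ)⁻¹ * ∑ i, (X *ᵥ what - y) i ^ 2
          + (what - wp) ⬝ᵥ H *ᵥ (what - wp)) :
    w2 = what := by
  set u : Fin p → ℝ := w2 - what with hu
  have hw2 : w2 = what + u := by simp [hu]
  have hsq : ∀ v : Fin n → ℝ, ∑ i, v i ^ 2 = v ⬝ᵥ v := by
    intro v; simp [dotProduct, sq]
  -- expand the data-fit term
  have hdat : (n:ℝ)⁻¹ * ∑ i, (X *ᵥ w2 - y) i ^ 2
      = (n:ℝ)⁻¹ * ∑ i, (X *ᵥ what - y) i ^ 2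
        + 2 * (u ⬝ᵥ (((n:ℝ)⁻¹ • (Xᵀ * X)) *ᵥ what - (n:ℝ)⁻¹ • (Xᵀ *ᵥ y)))
        + u ⬝ᵥ ((n:ℝ)⁻¹ • (Xᵀ * X)) *ᵥ u := by
    have h1 : X *ᵥ w2 - y = (X *ᵥ what - y) + X *ᵥ u := by
      rw [hw2, mulVec_add]; abel
    have hx : ∀ v : Fin n → ℝ, (X *ᵥ u) ⬝ᵥ v = u ⬝ᵥ (Xᵀ *ᵥ v) := by
      intro v
      rw [dotProduct_comm, dotProduct_mulVec, ← mulVec_transpose, dotProduct_comm]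
    rw [hsq, hsq, h1]
    rw [add_dotProduct, dotProduct_add, dotProduct_add]
    rw [dotProduct_comm (X *ᵥ what - y) (X *ᵥ u), hx, hx]
    have hxu : Xᵀ *ᵥ (X *ᵥ what - y) = (Xᵀ * X) *ᵥ what - Xᵀ *ᵥ y := by
      rw [mulVec_sub, mulVec_mulVec]
    have hxx : Xᵀ *ᵥ (X *ᵥ u) = (Xᵀ * X) *ᵥ u := by rw [mulVec_mulVec]
    rw [hxu, hxx]
    have e1 : u ⬝ᵥ ((n:ℝ)⁻¹ • (Xᵀ * X)) *ᵥ u = (n:ℝ)⁻¹ * (u ⬝ᵥ (Xᵀ * X) *ᵥ u) := by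
      rw [smul_mulVec, dotProduct_smul]; simp
    have e2 : u ⬝ᵥ (((n:ℝ)⁻¹ • (Xᵀ * X)) *ᵥ what - (n:ℝ)⁻¹ • (Xᵀ *ᵥ y))
        = (n:ℝ)⁻¹ * (u ⬝ᵥ ((Xᵀ * X) *ᵥ what - Xᵀ *ᵥ y)) := by
      rw [smul_mulVec, ← smul_sub, dotProduct_smul]; simp
    rw [e1, e2]
    ring
  -- expand the regularizer term
  have hreg : (w2 - wp) ⬝ᵥ H *ᵥ (w2 - wp)
      = u ⬝ᵥ H *ᵥ u + 2 * (u ⬝ᵥ H *ᵥ (what - wp))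
        + (what - wp) ⬝ᵥ H *ᵥ (what - wp) := by
    have h2 : w2 - wp = u + (what - wp) := by rw [hw2]; abel
    rw [h2, quad_expand H hH]
  have hcross : u ⬝ᵥ (((n:ℝ)⁻¹ • (Xᵀ * X)) *ᵥ what - (n:ℝ)⁻¹ • (Xᵀ *ᵥ y))
        + u ⬝ᵥ H *ᵥ (what - wp) = 0 := by
    rw [← dotProduct_add]
    have : ((n:ℝ)⁻¹ • (Xᵀ * X)) *ᵥ what - (n:ℝ)⁻¹ • (Xᵀ *ᵥ y) + H *ᵥ (what - wp) = 0 := by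
      rw [sub_add_eq_add_sub, hstat]; simp
    rw [this, dotProduct_zero]
  have hq : u ⬝ᵥ ((n:ℝ)⁻¹ • (Xᵀ * X) + H) *ᵥ u ≤ 0 := by
    have := hmin
    rw [hdat, hreg] at this
    have hsplit : u ⬝ᵥ ((n:ℝ)⁻¹ • (Xᵀ * X) + H) *ᵥ u
        = u ⬝ᵥ ((n:ℝ)⁻¹ • (Xᵀ * X)) *ᵥ u + u ⬝ᵥ H *ᵥ u := by
      rw [add_mulVec, dotProduct_add]
    rw [hsplit]
    nlinarith [hcross]
  have := hMpd u hq
  rw [hw2, this, add_zero]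

lemma task_step {p n : ℕ}
    (X : Matrix (Fin n) (Fin p) ℝ) (y : Fin n → ℝ)
    (Q : Matrix (Fin p) (Fin p) ℝ) (hQ : Qᵀ * Q = 1)
    (γ : Fin p → ℝ) (hγ : ∀ j, 0 < γ j)
    (hSig : (n:ℝ)⁻¹ • (Xᵀ * X) = Q * diagonal γ * Qᵀ)
    (s : Fin p → ℝ) (hs : ∀ j, 0 < s j * γ j ∧ s j * γ j < 1)
    (m : ℕ) (hm : 1 ≤ m)
    (lam : Fin p → ℝ)
    (hlam : ∀ j, lam j = γ j * (1 - s j * γ j) ^ m / (1 - (1 - s j * γ j) ^ m))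
    (wp : Fin p → ℝ)
    (g : ℕ → Fin p → ℝ) (hg0 : g 0 = wp)
    (hgrec : ∀ τ, g (τ + 1)
      = g τ - (n:ℝ)⁻¹ • ((Q * diagonal s * Qᵀ) *ᵥ (Xᵀ *ᵥ (X *ᵥ g τ - y))))
    (w2 : Fin p → ℝ)
    (hmin : ∀ w, (n:ℝ)⁻¹ * ∑ i, (X *ᵥ w2 - y) i ^ 2
          + (w2 - wp) ⬝ᵥ (Q * diagonal lam * Qᵀ) *ᵥ (w2 - wp)
        ≤ (n:ℝ)⁻¹ * ∑ i, (X *ᵥ w - y) i ^ 2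
          + (w - wp) ⬝ᵥ (Q * diagonal lam * Qᵀ) *ᵥ (w - wp)) :
    g m = w2 := by
  have hQQ : Q * Qᵀ = 1 := mul_eq_one_comm.mp hQ
  have hγ' : ∀ j, γ j ≠ 0 := fun j => (hγ j).ne'
  have hρpos : ∀ j, 0 < (1 - s j * γ j) ^ m :=
    fun j => pow_pos (by linarith [(hs j).2]) m
  have hρlt : ∀ j, (1 - s j * γ j) ^ m < 1 := by
    intro j
    apply pow_lt_one₀ (by linarith [(hs j).2]) (by linarith [(hs j).1])
    omega
  set b := (n:ℝ)⁻¹ • (Xᵀ *ᵥ y) with hb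
  -- recursion in the spectral form
  have hgrec' : ∀ τ, g (τ + 1)
      = g τ - (Q * diagonal s * Qᵀ) *ᵥ ((Q * diagonal γ * Qᵀ) *ᵥ g τ - b) := by
    intro τ
    rw [hgrec τ]
    congr 1
    rw [← mulVec_smul]
    congr 1
    rw [mulVec_sub, mulVec_mulVec, smul_sub, ← smul_mulVec, hSig, hb]
  have hclosed := iter_closed Q hQ hQQ γ s hγ' b wp g hg0 hgrec' m
  set wbar := (Q * diagonal (fun j => (γ j)⁻¹) * Qᵀ) *ᵥ b with hwbar
  set u := wp - wbar with hu
  set what := wbar + (Q * diagonal (fun j => (1 - s j * γ j) ^ m) * Qᵀ) *ᵥ u with hwhat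
  have hbar : (Q * diagonal γ * Qᵀ) *ᵥ wbar = b := by
    rw [hwbar, Dvec Q hQ]
    have h1 : (fun j => γ j * (γ j)⁻¹) = fun _ : Fin p => (1:ℝ) := by
      funext j; exact mul_inv_cancel₀ (hγ' j)
    rw [h1, Done Q hQQ, one_mulVec]
  -- stationarity of `what`
  have hstat : ((n:ℝ)⁻¹ • (Xᵀ * X)) *ᵥ what
      + (Q * diagonal lam * Qᵀ) *ᵥ (what - wp) = b := by
    rw [hSig]
    have h1 : (Q * diagonal γ * Qᵀ) *ᵥ what
        = b + (Q * diagonal (fun j => γ j * (1 - s j * γ j) ^ m) * Qᵀ) *ᵥ u := by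
      rw [hwhat, mulVec_add, hbar, Dvec Q hQ]
    have h2 : what - wp = (Q * diagonal (fun j => (1 - s j * γ j) ^ m - 1) * Qᵀ) *ᵥ u := by
      have e1 : what - wp = (Q * diagonal (fun j => (1 - s j * γ j) ^ m) * Qᵀ) *ᵥ u - u := by
        rw [hwhat, hu]; abel
      have e2 : u = (Q * diagonal (fun _ : Fin p => (1:ℝ)) * Qᵀ) *ᵥ u := by
        rw [Done Q hQQ, one_mulVec]
      rw [e1]
      nth_rewrite 2 [e2]
      rw [← sub_mulVec, Dsub Q]
    rw [h1, h2, Dvec Q hQ]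
    have h3 : (fun j => lam j * ((1 - s j * γ j) ^ m - 1))
        = fun j => -(γ j * (1 - s j * γ j) ^ m) := by
      funext j
      have h1ρ : 1 - (1 - s j * γ j) ^ m ≠ 0 := by
        have := hρlt j; intro hcon; nlinarith
      rw [hlam j]
      rw [div_mul_eq_mul_div, div_eq_iff h1ρ]
      ring
    rw [h3]
    rw [add_assoc, ← add_mulVec, Dadd Q]
    have h4 : (fun j => γ j * (1 - s j * γ j) ^ m + -(γ j * (1 - s j * γ j) ^ m))
        = fun _ : Fin p => (0:ℝ) := by funext j; ring
    rw [h4]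
    have h5 : diagonal (fun _ : Fin p => (0:ℝ)) = 0 := Matrix.diagonal_zero
    rw [h5, Matrix.mul_zero, Matrix.zero_mul, zero_mulVec, add_zero]
  -- symmetry of the regularizer
  have hHsym : (Q * diagonal lam * Qᵀ)ᵀ = Q * diagonal lam * Qᵀ := by
    rw [Matrix.transpose_mul, Matrix.transpose_mul, transpose_transpose,
      diagonal_transpose, Matrix.mul_assoc]
  -- positive definiteness
  have hMpd : ∀ v : Fin p → ℝ,
      v ⬝ᵥ ((n:ℝ)⁻¹ • (Xᵀ * X) + Q * diagonal lam * Qᵀ) *ᵥ v ≤ 0 → v = 0 := by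
    intro v hv
    rw [hSig, Dadd Q] at hv
    refine Dposdef Q hQQ _ ?_ v hv
    intro j
    have hlamnn : 0 ≤ lam j := by
      rw [hlam j]
      exact le_of_lt (div_pos (mul_pos (hγ j) (hρpos j)) (by linarith [hρlt j]))
    have := hγ j
    linarith
  have hfin := argmin_eq X y (Q * diagonal lam * Qᵀ) hHsym hMpd wp what w2 hstat (hmin what)
  rw [hclosed]
  exact hfin.symm

/-- **Equivalence of early stopping and generalized
ℓ₂-regularization, Theorem 5.1.** For each task `t` with
`Σ_t = U_t Γ_t U_tᵀ` (`Γ_t` positive definite diagonal),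
`A_t = U_t S_t U_tᵀ` with `0 < s_j^{(t)} γ_j^{(t)} < 1`, `m_t ≥ 1`, and
`H_t = U_t Λ_t U_tᵀ` with
`λ_j^{(t)} = γ_j^{(t)}(1 − s_j^{(t)} γ_j^{(t)})^{m_t} / (1 − (1 − s_j^{(t)} γ_j^{(t)})^{m_t})`,
the early stopping estimator coincides with the generalized ℓ₂-regularized
estimator after every task: `ŵ_t^{ES} = ŵ_t^{GR}` for all `t ∈ [T]`. -/
theorem early_stopping_eq_generalized_l2
    (T p : ℕ)
    (n : Fin T → ℕ) (hn : ∀ t, 0 < n t)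
    (X : (t : Fin T) → Matrix (Fin (n t)) (Fin p) ℝ)
    (wstar : Fin p → ℝ)
    (ε : (t : Fin T) → Fin (n t) → ℝ)
    (y : (t : Fin T) → Fin (n t) → ℝ) (hy : ∀ t, y t = X t *ᵥ wstar + ε t)
    (U : Fin T → Matrix (Fin p) (Fin p) ℝ) (hU : ∀ t, (U t)ᵀ * U t = 1)
    (γ : Fin T → Fin p → ℝ) (hγ : ∀ t j, 0 < γ t j)
    (hSig : ∀ t, ((n t : ℝ))⁻¹ • ((X t)ᵀ * X t)
      = U t * Matrix.diagonal (γ t) * (U t)ᵀ)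
    (s : Fin T → Fin p → ℝ)
    (hs : ∀ t j, 0 < s t j * γ t j ∧ s t j * γ t j < 1)
    (m : Fin T → ℕ) (hm : ∀ t, 1 ≤ m t)
    (lam : Fin T → Fin p → ℝ)
    (hlam : ∀ t j, lam t j
      = γ t j * (1 - s t j * γ t j) ^ m t / (1 - (1 - s t j * γ t j) ^ m t))
    -- the early stopping estimator
    (wES : ℕ → Fin p → ℝ) (hES0 : wES 0 = 0)
    (gd : (t : Fin T) → ℕ → Fin p → ℝ)
    (hgd0 : ∀ t : Fin T, gd t 0 = wES (t : ℕ))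
    (hgd : ∀ (t : Fin T) (τ : ℕ), gd t (τ + 1)
      = gd t τ - (n t : ℝ)⁻¹ • ((U t * Matrix.diagonal (s t) * (U t)ᵀ) *ᵥ
          ((X t)ᵀ *ᵥ (X t *ᵥ gd t τ - y t))))
    (hESstep : ∀ t : Fin T, wES ((t : ℕ) + 1) = gd t (m t))
    -- the generalized ℓ₂-regularized estimator
    (wGR : ℕ → Fin p → ℝ) (hGR0 : wGR 0 = 0)
    (hGR : ∀ (t : Fin T) (w : Fin p → ℝ),
      (n t : ℝ)⁻¹ * ∑ i, (X t *ᵥ wGR ((t : ℕ) + 1) - y t) i ^ 2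
        + (wGR ((t : ℕ) + 1) - wGR (t : ℕ)) ⬝ᵥ
            ((U t * Matrix.diagonal (lam t) * (U t)ᵀ) *ᵥ
              (wGR ((t : ℕ) + 1) - wGR (t : ℕ)))
      ≤ (n t : ℝ)⁻¹ * ∑ i, (X t *ᵥ w - y t) i ^ 2
        + (w - wGR (t : ℕ)) ⬝ᵥ
            ((U t * Matrix.diagonal (lam t) * (U t)ᵀ) *ᵥ (w - wGR (t : ℕ)))) :
    ∀ t : Fin T, wES ((t : ℕ) + 1) = wGR ((t : ℕ) + 1) := by

  have main : ∀ k : ℕ, ∀ t : Fin T, (t : ℕ) = k →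
      wES ((t : ℕ) + 1) = wGR ((t : ℕ) + 1) := by
    intro k
    induction k using Nat.strong_induction_on with
    | _ k ih =>
      intro t htk
      have hprev : wES (t : ℕ) = wGR (t : ℕ) := by
        rcases Nat.eq_zero_or_pos (t : ℕ) with h0 | hpos
        · rw [h0, hES0, hGR0]
        · obtain ⟨k', hk'⟩ : ∃ k', (t : ℕ) = k' + 1 := ⟨(t : ℕ) - 1, by omega⟩
          have hk'T : k' < T := by have := t.isLt; omega
          have h := ih k' (by omega) ⟨k', hk'T⟩ rfl
          rw [hk']
          simpa using h
      have step := task_step (X t) (y t) (U t) (hU t) (γ t) (hγ t) (hSig t)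
        (s t) (hs t) (m t) (hm t) (lam t) (hlam t) (wGR (t : ℕ))
        (gd t) (by rw [hgd0 t, hprev]) (hgd t) (wGR ((t : ℕ) + 1)) (hGR t)
      rw [hESstep t, step]
  intro t
  exact main (t : ℕ) t rfl
end

section
/- (Oracle rate of early stopping, Corollary 5.2.) Under the shared assumptions with u_jᵀ w* ≠ 0 for every j ∈ [p], suppose the learning-rate matrices are A_t = U S_t Uᵀ with S_t = diag(s_1^{(t)},…,s_p^{(t)}) and integers m_t ≥ 1 satisfying (1 − s_j^{(t)} γ_j^{(t)})^{m_t} = 1 − γ_j^{(t)} n_t / ( σ²/e_j^{(0)} + γ_j^{(1)} n₁ + ⋯ + γ_j^{(t)} n_t ) for every j ∈ [p] and t ∈ [T]. Then the early stopping estimator satisfies, for every t ∈ [T], L(ŵ_t^{ES}) = ∑_{j=1}^p σ² / ( σ²/e_j^{(0)} + γ_j^{(1)} n₁ + ⋯ + γ_j^{(t)} n_t ). -/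
open MeasureTheory Matrix ProbabilityTheory Finset

private lemma aux_l2mul {Ω : Type} [MeasurableSpace Ω] {μ : Measure Ω} {f g : Ω → ℝ}
    (hf : MemLp f 2 μ) (hg : MemLp g 2 μ) : Integrable (fun ω => f ω * g ω) μ := by
  have h1 : Integrable (fun ω => (f ω + g ω) ^ 2) μ := by
    simpa using (hf.add hg).integrable_sq
  have h2 := hf.integrable_sq
  have h3 := hg.integrable_sq
  have h4 : (fun ω => f ω * g ω)
      = fun ω => ((f ω + g ω) ^ 2 - f ω ^ 2 - g ω ^ 2) / 2 := by
    funext ω; ring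
  rw [h4]
  exact ((h1.sub h2).sub h3).div_const 2

/-- **Oracle rate of early stopping, Corollary 5.2.**
Under the shared assumptions with `u_jᵀ w* ≠ 0` for every `j`, if the
learning-rate matrices `A_t = U S_t Uᵀ` and iteration counts `m_t ≥ 1` satisfy
`(1 − s_j^{(t)} γ_j^{(t)})^{m_t}
   = 1 − γ_j^{(t)} n_t / (σ²/e_j^{(0)} + ∑_{τ≤t} γ_j^{(τ)} n_τ)`,
then the early stopping estimator satisfies, for every `t ∈ [T]`,
`L(ŵ_t^{ES}) = ∑_j σ²/(σ²/e_j^{(0)} + ∑_{τ≤t} γ_j^{(τ)} n_τ)`. -/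
theorem early_stopping_oracle_rate
    {Ω : Type} [MeasurableSpace Ω] (μ : Measure Ω) [IsProbabilityMeasure μ]
    (T p : ℕ)
    (n : Fin T → ℕ) (hn : ∀ t, 0 < n t)
    (X : (t : Fin T) → Matrix (Fin (n t)) (Fin p) ℝ)
    (U : Matrix (Fin p) (Fin p) ℝ) (hU : Uᵀ * U = 1)
    (γ : Fin T → Fin p → ℝ) (hγ : ∀ t j, 0 ≤ γ t j)
    (hSig : ∀ t, ((n t : ℝ))⁻¹ • ((X t)ᵀ * X t) = U * Matrix.diagonal (γ t) * Uᵀ)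
    (hfull : ∀ j, 0 < ∑ t, γ t j)
    (wstar : Fin p → ℝ) (hwstar : ∀ j, ∑ k, U k j * wstar k ≠ 0)
    (σ2 : ℝ) (hσ2 : 0 < σ2)
    (ε : (t : Fin T) → Ω → Fin (n t) → ℝ)
    (hεL2 : ∀ t i, MemLp (fun ω => ε t ω i) 2 μ)
    (hmean : ∀ t i, ∫ ω, ε t ω i ∂μ = 0)
    (hcov : ∀ t i i', ∫ ω, ε t ω i * ε t ω i' ∂μ = if i = i' then σ2 else 0)
    (hindep : iIndepFun ε μ)
    -- learning rates and iteration counts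
    (s : Fin T → Fin p → ℝ) (m : Fin T → ℕ) (hm : ∀ t, 1 ≤ m t)
    (hsm : ∀ (t : Fin T) (j : Fin p),
      (1 - s t j * γ t j) ^ m t
        = 1 - γ t j * n t / (σ2 / (∑ k, U k j * wstar k) ^ 2
            + ∑ τ ∈ Finset.univ.filter (fun τ => τ ≤ t), γ τ j * n τ))
    -- the early stopping estimator
    (wES : ℕ → Ω → Fin p → ℝ) (hES0 : ∀ ω, wES 0 ω = 0)
    (gd : (t : Fin T) → ℕ → Ω → Fin p → ℝ)
    (hgd0 : ∀ (t : Fin T) (ω : Ω), gd t 0 ω = wES (t : ℕ) ω)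
    (hgd : ∀ (t : Fin T) (τ : ℕ) (ω : Ω), gd t (τ + 1) ω
      = gd t τ ω - (n t : ℝ)⁻¹ • ((U * Matrix.diagonal (s t) * Uᵀ) *ᵥ
          ((X t)ᵀ *ᵥ (X t *ᵥ gd t τ ω - (X t *ᵥ wstar + ε t ω)))))
    (hESstep : ∀ (t : Fin T) (ω : Ω), wES ((t : ℕ) + 1) ω = gd t (m t) ω) :
    ∀ t : Fin T,
      ∫ ω, ∑ j, (wES ((t : ℕ) + 1) ω j - wstar j) ^ 2 ∂μ
        = ∑ j, σ2 / (σ2 / (∑ k, U k j * wstar k) ^ 2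
            + ∑ τ ∈ Finset.univ.filter (fun τ => τ ≤ t), γ τ j * n τ) := by
  classical
  -- abbreviations
  set v : Fin p → ℝ := fun j => ∑ k, U k j * wstar k with hv
  set Dv : Fin T → Fin p → ℝ := fun r j =>
    σ2 / (v j) ^ 2 + ∑ τ ∈ Finset.univ.filter (fun τ => τ ≤ r), γ τ j * (n τ : ℝ) with hDv
  set ξ : Fin T → Fin p → Ω → ℝ := fun r j ω => ∑ i, (X r * U) i j * ε r ω i with hξ
  -- basic facts
  have hUUT : U * Uᵀ = 1 := mul_eq_one_comm.mp hU
  have hnR : ∀ r : Fin T, (0:ℝ) < (n r : ℝ) := fun r => by exact_mod_cast hn r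
  have hXX : ∀ r : Fin T, (X r)ᵀ * X r = (n r : ℝ) • (U * Matrix.diagonal (γ r) * Uᵀ) := by
    intro r
    rw [← hSig r, smul_smul, mul_inv_cancel₀ (ne_of_gt (hnR r)), one_smul]
  have hXU : ∀ (r : Fin T) (j : Fin p),
      ∑ i, ((X r * U) i j) ^ 2 = (n r : ℝ) * γ r j := by
    intro r j
    have h1 : (X r * U)ᵀ * (X r * U) = (n r : ℝ) • Matrix.diagonal (γ r) := by
      rw [Matrix.transpose_mul, Matrix.mul_assoc, ← Matrix.mul_assoc ((X r)ᵀ), hXX r,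
        Matrix.smul_mul, Matrix.mul_smul, Matrix.mul_assoc (U * Matrix.diagonal (γ r)), hU,
        Matrix.mul_one, ← Matrix.mul_assoc, hU, Matrix.one_mul]
    have h2 := congrFun (congrFun h1 j) j
    simp only [Matrix.mul_apply, Matrix.transpose_apply, Matrix.smul_apply,
      Matrix.diagonal_apply_eq, smul_eq_mul] at h2
    simpa [sq, Matrix.mul_apply] using h2
  have hv2 : ∀ j, 0 < (v j) ^ 2 :=
    fun j => lt_of_le_of_ne (sq_nonneg _) (Ne.symm (pow_ne_zero 2 (hwstar j)))
  have hDpos : ∀ (r : Fin T) (j : Fin p), 0 < Dv r j := by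
    intro r j
    have h1 : 0 < σ2 / (v j) ^ 2 := div_pos hσ2 (hv2 j)
    have h2 : 0 ≤ ∑ τ ∈ Finset.univ.filter (fun τ => τ ≤ r), γ τ j * (n τ : ℝ) :=
      Finset.sum_nonneg fun τ _ => mul_nonneg (hγ τ j) (le_of_lt (hnR τ))
    exact add_pos_of_pos_of_nonneg h1 h2
  -- ξ vanishes when γ = 0
  have hξzero : ∀ (r : Fin T) (j : Fin p), γ r j = 0 → ∀ ω, ξ r j ω = 0 := by
    intro r j h0 ω
    have hs : ∑ i, ((X r * U) i j) ^ 2 = 0 := by rw [hXU r j, h0, mul_zero]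
    have hcol := (Finset.sum_eq_zero_iff_of_nonneg
      (fun i _ => sq_nonneg ((X r * U) i j))).mp hs
    simp only [hξ]
    refine Finset.sum_eq_zero fun i _ => ?_
    have := hcol i (Finset.mem_univ i)
    rw [pow_eq_zero_iff (two_ne_zero)] at this
    rw [this, zero_mul]
  -- per-iteration identity
  have hstep1 : ∀ (r : Fin T) (τ : ℕ) (ω : Ω) (j : Fin p),
      (Uᵀ *ᵥ (gd r (τ+1) ω - wstar)) j
        = (1 - s r j * γ r j) * (Uᵀ *ᵥ (gd r τ ω - wstar)) j
          + (s r j * (n r : ℝ)⁻¹) * ξ r j ω := by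
    intro r τ ω j
    have hA : ∀ d : Fin p → ℝ, Uᵀ * (U * Matrix.diagonal d * Uᵀ) = Matrix.diagonal d * Uᵀ := by
      intro d; rw [← Matrix.mul_assoc, ← Matrix.mul_assoc, hU, Matrix.one_mul]
    have h0 : X r *ᵥ gd r τ ω - (X r *ᵥ wstar + ε r ω)
        = X r *ᵥ (gd r τ ω - wstar) - ε r ω := by
      rw [Matrix.mulVec_sub]; abel
    have h1 : gd r (τ+1) ω - wstar = (gd r τ ω - wstar)
        - (n r : ℝ)⁻¹ • ((U * Matrix.diagonal (s r) * Uᵀ) *ᵥ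
            ((X r)ᵀ *ᵥ (X r *ᵥ (gd r τ ω - wstar) - ε r ω))) := by
      rw [hgd r τ ω, h0]; abel
    have h2 : (Matrix.diagonal (s r) * Uᵀ) *ᵥ
        ((n r : ℝ) • ((U * Matrix.diagonal (γ r) * Uᵀ) *ᵥ (gd r τ ω - wstar)))
        = (n r : ℝ) • ((Matrix.diagonal (fun j => s r j * γ r j) * Uᵀ) *ᵥ (gd r τ ω - wstar)) := by
      rw [Matrix.mulVec_smul, Matrix.mulVec_mulVec, Matrix.mul_assoc, hA,
        ← Matrix.mul_assoc, Matrix.diagonal_mul_diagonal]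
    have hxi : ((X r * U)ᵀ *ᵥ ε r ω) j = ξ r j ω := by
      simp [hξ, Matrix.mulVec, dotProduct, Matrix.transpose_apply]
    rw [h1, Matrix.mulVec_sub, Matrix.mulVec_smul, Matrix.mulVec_mulVec, hA,
      Matrix.mulVec_sub ((X r)ᵀ), Matrix.mulVec_mulVec (gd r τ ω - wstar) ((X r)ᵀ) (X r),
      hXX r, Matrix.smul_mulVec, Matrix.mulVec_sub (Matrix.diagonal (s r) * Uᵀ), h2,
      Matrix.mulVec_mulVec (ε r ω), Matrix.mul_assoc (Matrix.diagonal (s r)),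
      ← Matrix.transpose_mul]
    have h3 : (Matrix.diagonal (fun j => s r j * γ r j) * Uᵀ) *ᵥ (gd r τ ω - wstar)
        = fun j => (s r j * γ r j) * (Uᵀ *ᵥ (gd r τ ω - wstar)) j := by
      funext i; rw [← Matrix.mulVec_mulVec, Matrix.mulVec_diagonal]
    have h4 : (Matrix.diagonal (s r) * (X r * U)ᵀ) *ᵥ ε r ω
        = fun j => s r j * ((X r * U)ᵀ *ᵥ ε r ω) j := by
      funext i; rw [← Matrix.mulVec_mulVec, Matrix.mulVec_diagonal]
    rw [h3, h4]
    simp only [Pi.sub_apply, Pi.smul_apply, smul_eq_mul, hxi]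
    have hn' : (n r : ℝ) ≠ 0 := (hnR r).ne'
    field_simp
    ring
  -- within-task closed form
  have hinner : ∀ (r : Fin T) (τ : ℕ) (ω : Ω) (j : Fin p),
      (Uᵀ *ᵥ (gd r τ ω - wstar)) j
        = (1 - s r j * γ r j) ^ τ * (Uᵀ *ᵥ (wES (r : ℕ) ω - wstar)) j
          + (s r j * (n r : ℝ)⁻¹) * (∑ i ∈ Finset.range τ, (1 - s r j * γ r j) ^ i)
            * ξ r j ω := by
    intro r τ ω j
    induction τ with
    | zero => simp [hgd0]
    | succ τ ih => rw [hstep1, ih, geom_sum_succ]; ring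
  -- per-task recursion
  have htask : ∀ (r : Fin T) (ω : Ω) (j : Fin p),
      Dv r j * (Uᵀ *ᵥ (wES ((r : ℕ) + 1) ω - wstar)) j
        = (Dv r j - γ r j * (n r : ℝ)) * (Uᵀ *ᵥ (wES (r : ℕ) ω - wstar)) j + ξ r j ω := by
    intro r ω j
    have hD := (hDpos r j).ne'
    have hsm' : (1 - s r j * γ r j) ^ m r = 1 - γ r j * (n r : ℝ) / Dv r j := hsm r j
    have hα : Dv r j * (1 - s r j * γ r j) ^ m r = Dv r j - γ r j * (n r : ℝ) := by
      rw [hsm']; field_simp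
    have h := hinner r (m r) ω j
    rw [← hESstep r ω] at h
    by_cases hγ0 : γ r j = 0
    · have hz := hξzero r j hγ0 ω
      rw [h, hz]
      rw [hγ0] at hα ⊢
      rw [mul_add]
      rw [← mul_assoc, hα]
      ring
    · -- geometric sum identity
      have hG := geom_sum_mul (1 - s r j * γ r j) (m r)
      rw [hsm'] at hG
      have h1 : (∑ i ∈ Finset.range (m r), (1 - s r j * γ r j) ^ i) * (s r j * γ r j)
          = γ r j * (n r : ℝ) / Dv r j := by
        have := hG; ring_nf at this ⊢; linarith
      have h2 : (∑ i ∈ Finset.range (m r), (1 - s r j * γ r j) ^ i) * s r j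
          = (n r : ℝ) / Dv r j := by
        have h3 : ((∑ i ∈ Finset.range (m r), (1 - s r j * γ r j) ^ i) * s r j) * γ r j
            = ((n r : ℝ) / Dv r j) * γ r j := by
          rw [mul_assoc]
          rw [h1]; ring
        exact mul_right_cancel₀ hγ0 h3
      have hg2 : Dv r j * ((s r j * (n r : ℝ)⁻¹)
          * (∑ i ∈ Finset.range (m r), (1 - s r j * γ r j) ^ i)) = 1 := by
        have hn' := (hnR r).ne'
        field_simp
        calc Dv r j * s r j * ∑ i ∈ Finset.range (m r), (1 - s r j * γ r j) ^ i
            = Dv r j * ((n r : ℝ) / Dv r j) := by rw [mul_assoc, mul_comm (s r j), h2]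
          _ = (n r : ℝ) := by field_simp
      rw [h]
      have expand : Dv r j * ((1 - s r j * γ r j) ^ m r * (Uᵀ *ᵥ (wES (r : ℕ) ω - wstar)) j
          + s r j * (n r : ℝ)⁻¹ * (∑ i ∈ Finset.range (m r), (1 - s r j * γ r j) ^ i)
            * ξ r j ω)
          = (Dv r j * (1 - s r j * γ r j) ^ m r) * (Uᵀ *ᵥ (wES (r : ℕ) ω - wstar)) j
            + (Dv r j * (s r j * (n r : ℝ)⁻¹
                * (∑ i ∈ Finset.range (m r), (1 - s r j * γ r j) ^ i))) * ξ r j ω := by ring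
      rw [expand, hα, hg2, one_mul]
  -- main induction over tasks
  have hmain : ∀ (k : ℕ) (hk : k < T), ∀ (ω : Ω) (j : Fin p),
      Dv ⟨k, hk⟩ j * (Uᵀ *ᵥ (wES (k + 1) ω - wstar)) j
        = -(σ2 / v j)
          + ∑ τ ∈ Finset.univ.filter (fun τ => τ ≤ (⟨k, hk⟩ : Fin T)), ξ τ j ω := by
    intro k
    induction k with
    | zero =>
      intro hk ω j
      have h := htask ⟨0, hk⟩ ω j
      have hfil : Finset.univ.filter (fun τ => τ ≤ (⟨0, hk⟩ : Fin T))
          = {(⟨0, hk⟩ : Fin T)} := by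
        ext τ; simp [Fin.le_def, Fin.ext_iff, Nat.le_zero]
      have hc0 : (Uᵀ *ᵥ (wES 0 ω - wstar)) j = -(v j) := by
        rw [hES0 ω]
        simp [hv, Matrix.mulVec, dotProduct, Matrix.transpose_apply]
      have hD0 : Dv ⟨0, hk⟩ j = σ2 / (v j) ^ 2 + γ ⟨0, hk⟩ j * (n ⟨0, hk⟩ : ℝ) := by
        simp only [hDv]
        rw [hfil, Finset.sum_singleton]
      rw [h, hc0, hfil, Finset.sum_singleton, hD0]
      have hvj : v j ≠ 0 := hwstar j
      field_simp
      ring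
    | succ k ih =>
      intro hk ω j
      have hk' : k < T := Nat.lt_of_succ_lt hk
      have h := htask ⟨k + 1, hk⟩ ω j
      have hfil : Finset.univ.filter (fun τ => τ ≤ (⟨k + 1, hk⟩ : Fin T))
          = insert (⟨k + 1, hk⟩ : Fin T)
              (Finset.univ.filter (fun τ => τ ≤ (⟨k, hk'⟩ : Fin T))) := by
        ext τ
        simp only [Finset.mem_filter, Finset.mem_univ, true_and, Finset.mem_insert,
          Fin.le_def, Fin.ext_iff]
        omega
      have hnotmem : (⟨k + 1, hk⟩ : Fin T) ∉
          Finset.univ.filter (fun τ => τ ≤ (⟨k, hk'⟩ : Fin T)) := by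
        simp [Fin.le_def]
      have hDrel : Dv ⟨k + 1, hk⟩ j - γ ⟨k + 1, hk⟩ j * (n ⟨k + 1, hk⟩ : ℝ)
          = Dv ⟨k, hk'⟩ j := by
        simp only [hDv]
        rw [hfil, Finset.sum_insert hnotmem]
        ring
      rw [h, hDrel, ih hk' ω j, hfil, Finset.sum_insert hnotmem]
      ring
  intro t
  -- key identity for the given t
  have hkey : ∀ (ω : Ω) (j : Fin p),
      Dv t j * (Uᵀ *ᵥ (wES ((t : ℕ) + 1) ω - wstar)) j
        = -(σ2 / v j) + ∑ τ ∈ Finset.univ.filter (fun τ => τ ≤ t), ξ τ j ω := by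
    intro ω j
    have := hmain t.val t.isLt ω j
    simpa [Fin.eta] using this
  -- L2 facts for ξ
  have hξL2 : ∀ (r : Fin T) (j : Fin p), MemLp (fun ω => ξ r j ω) 2 μ := by
    intro r j
    simp only [hξ]
    exact memLp_finset_sum _ (fun i _ => (hεL2 r i).const_mul _)
  have hξint : ∀ (r : Fin T) (j : Fin p), Integrable (fun ω => ξ r j ω) μ :=
    fun r j => (hξL2 r j).integrable one_le_two
  have hξmean : ∀ (r : Fin T) (j : Fin p), ∫ ω, ξ r j ω ∂μ = 0 := by
    intro r j
    simp only [hξ]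
    rw [integral_finset_sum _ (fun i _ => ((hεL2 r i).integrable one_le_two).const_mul _)]
    simp [integral_const_mul, hmean]
  have hξsq : ∀ (r : Fin T) (j : Fin p),
      ∫ ω, ξ r j ω * ξ r j ω ∂μ = σ2 * ((n r : ℝ) * γ r j) := by
    intro r j
    have hexp : ∀ ω : Ω, ξ r j ω * ξ r j ω
        = ∑ i, ∑ i', ((X r * U) i j * (X r * U) i' j) * (ε r ω i * ε r ω i') := by
      intro ω
      simp only [hξ]
      rw [Finset.sum_mul_sum]
      exact Finset.sum_congr rfl fun i _ => Finset.sum_congr rfl fun i' _ => by ring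
    simp only [hexp]
    rw [integral_finset_sum _ (fun i _ => integrable_finset_sum _ (fun i' _ =>
      (aux_l2mul (hεL2 r i) (hεL2 r i')).const_mul _))]
    have h5 : ∀ i : Fin (n r),
        ∫ ω, ∑ i', ((X r * U) i j * (X r * U) i' j) * (ε r ω i * ε r ω i') ∂μ
        = ∑ i', ((X r * U) i j * (X r * U) i' j) * (if i = i' then σ2 else 0) := by
      intro i
      rw [integral_finset_sum _ (fun i' _ => (aux_l2mul (hεL2 r i) (hεL2 r i')).const_mul _)]
      exact Finset.sum_congr rfl fun i' _ => by rw [integral_const_mul, hcov]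
    simp only [h5]
    have h6 : ∀ i : Fin (n r),
        ∑ i', ((X r * U) i j * (X r * U) i' j) * (if i = i' then σ2 else 0)
          = ((X r * U) i j) ^ 2 * σ2 := by
      intro i
      rw [Finset.sum_eq_single_of_mem i (Finset.mem_univ i)]
      · simp [sq]
      · intro i' _ hne
        rw [if_neg (fun h => hne h.symm), mul_zero]
    simp only [h6]
    rw [← Finset.sum_mul, hXU r j]
    ring
  have hcross : ∀ (r r' : Fin T) (j : Fin p), r ≠ r' →
      ∫ ω, ξ r j ω * ξ r' j ω ∂μ = 0 := by
    intro r r' j hne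
    have hφ : ∀ (a : Fin T), Measurable (fun x : Fin (n a) → ℝ => ∑ i, (X a * U) i j * x i) :=
      fun a => Finset.measurable_sum _ fun i _ => (measurable_pi_apply i).const_mul _
    have hIndep : IndepFun (fun ω => ξ r j ω) (fun ω => ξ r' j ω) μ :=
      (hindep.indepFun hne).comp (hφ r) (hφ r')
    have h7 := hIndep.integral_fun_mul_eq_mul_integral (hξL2 r j).aestronglyMeasurable
      (hξL2 r' j).aestronglyMeasurable
    calc ∫ ω, ξ r j ω * ξ r' j ω ∂μ
        = (∫ ω, ξ r j ω ∂μ) * ∫ ω, ξ r' j ω ∂μ := h7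
      _ = 0 := by rw [hξmean r j, zero_mul]
  -- facts about S j = ∑_{τ ≤ t} ξ τ j
  have hSL2 : ∀ j, MemLp (fun ω =>
      ∑ τ ∈ Finset.univ.filter (fun τ => τ ≤ t), ξ τ j ω) 2 μ :=
    fun j => memLp_finset_sum _ (fun τ _ => hξL2 τ j)
  have hSmean : ∀ j, ∫ ω, (∑ τ ∈ Finset.univ.filter (fun τ => τ ≤ t), ξ τ j ω) ∂μ = 0 := by
    intro j
    rw [integral_finset_sum _ (fun τ _ => hξint τ j)]
    exact Finset.sum_eq_zero fun τ _ => hξmean τ j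
  have hSsq : ∀ j, ∫ ω, (∑ τ ∈ Finset.univ.filter (fun τ => τ ≤ t), ξ τ j ω)
        * (∑ τ ∈ Finset.univ.filter (fun τ => τ ≤ t), ξ τ j ω) ∂μ
      = ∑ τ ∈ Finset.univ.filter (fun τ => τ ≤ t), σ2 * ((n τ : ℝ) * γ τ j) := by
    intro j
    have hexp : ∀ ω : Ω, (∑ τ ∈ Finset.univ.filter (fun τ => τ ≤ t), ξ τ j ω)
        * (∑ τ ∈ Finset.univ.filter (fun τ => τ ≤ t), ξ τ j ω)
        = ∑ τ ∈ Finset.univ.filter (fun τ => τ ≤ t),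
            ∑ τ' ∈ Finset.univ.filter (fun τ => τ ≤ t), ξ τ j ω * ξ τ' j ω := by
      intro ω; rw [Finset.sum_mul_sum]
    simp only [hexp]
    rw [integral_finset_sum _ (fun τ _ => integrable_finset_sum _ (fun τ' _ =>
      aux_l2mul (hξL2 τ j) (hξL2 τ' j)))]
    refine Finset.sum_congr rfl fun τ hτ => ?_
    rw [integral_finset_sum _ (fun τ' _ => aux_l2mul (hξL2 τ j) (hξL2 τ' j))]
    rw [Finset.sum_eq_single_of_mem τ hτ (fun τ' _ hne => hcross τ τ' j (Ne.symm hne))]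
    exact hξsq τ j
  -- per-coordinate value of the integral
  have hj : ∀ j, ∫ ω, ((Uᵀ *ᵥ (wES ((t : ℕ) + 1) ω - wstar)) j) ^ 2 ∂μ = σ2 / Dv t j := by
    intro j
    have hDj : Dv t j ≠ 0 := (hDpos t j).ne'
    have hvj : v j ≠ 0 := hwstar j
    have hrw : ∀ ω : Ω, (Uᵀ *ᵥ (wES ((t : ℕ) + 1) ω - wstar)) j
        = (-(σ2 / v j) + ∑ τ ∈ Finset.univ.filter (fun τ => τ ≤ t), ξ τ j ω) / Dv t j := by
      intro ω
      rw [eq_div_iff hDj, mul_comm]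
      exact hkey ω j
    simp only [hrw, div_pow]
    rw [integral_div]
    have hexp2 : ∀ ω : Ω,
        (-(σ2 / v j) + ∑ τ ∈ Finset.univ.filter (fun τ => τ ≤ t), ξ τ j ω) ^ 2
        = (σ2 / v j) ^ 2
          + (-(2 * (σ2 / v j))) * (∑ τ ∈ Finset.univ.filter (fun τ => τ ≤ t), ξ τ j ω)
          + (∑ τ ∈ Finset.univ.filter (fun τ => τ ≤ t), ξ τ j ω)
            * (∑ τ ∈ Finset.univ.filter (fun τ => τ ≤ t), ξ τ j ω) := by
      intro ω; ring
    simp only [hexp2]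
    have hint1 : Integrable (fun ω => (-(2 * (σ2 / v j)))
        * (∑ τ ∈ Finset.univ.filter (fun τ => τ ≤ t), ξ τ j ω)) μ :=
      ((hSL2 j).integrable one_le_two).const_mul _
    have hint2 : Integrable (fun ω =>
        (∑ τ ∈ Finset.univ.filter (fun τ => τ ≤ t), ξ τ j ω)
        * (∑ τ ∈ Finset.univ.filter (fun τ => τ ≤ t), ξ τ j ω)) μ :=
      aux_l2mul (hSL2 j) (hSL2 j)
    have hint0 : Integrable (fun ω => (σ2 / v j) ^ 2 + (-(2 * (σ2 / v j)))
        * (∑ τ ∈ Finset.univ.filter (fun τ => τ ≤ t), ξ τ j ω)) μ := by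
      exact (integrable_const _).add hint1
    have e1 : ∫ ω, ((σ2 / v j) ^ 2
          + (-(2 * (σ2 / v j))) * (∑ τ ∈ Finset.univ.filter (fun τ => τ ≤ t), ξ τ j ω)
          + (∑ τ ∈ Finset.univ.filter (fun τ => τ ≤ t), ξ τ j ω)
            * (∑ τ ∈ Finset.univ.filter (fun τ => τ ≤ t), ξ τ j ω)) ∂μ
        = (∫ ω, ((σ2 / v j) ^ 2 + (-(2 * (σ2 / v j)))
            * (∑ τ ∈ Finset.univ.filter (fun τ => τ ≤ t), ξ τ j ω)) ∂μ)
          + ∫ ω, (∑ τ ∈ Finset.univ.filter (fun τ => τ ≤ t), ξ τ j ω)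
            * (∑ τ ∈ Finset.univ.filter (fun τ => τ ≤ t), ξ τ j ω) ∂μ :=
      integral_add hint0 hint2
    have e2 : ∫ ω, ((σ2 / v j) ^ 2 + (-(2 * (σ2 / v j)))
          * (∑ τ ∈ Finset.univ.filter (fun τ => τ ≤ t), ξ τ j ω)) ∂μ
        = (∫ _ω : Ω, (σ2 / v j) ^ 2 ∂μ)
          + ∫ ω, (-(2 * (σ2 / v j)))
            * (∑ τ ∈ Finset.univ.filter (fun τ => τ ≤ t), ξ τ j ω) ∂μ :=
      integral_add (integrable_const _) hint1
    rw [e1, e2, integral_const, integral_const_mul, hSmean j, hSsq j]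
    simp only [measure_univ, probReal_univ, ENNReal.toReal_one, one_smul, mul_zero, add_zero, smul_eq_mul,
      one_mul]
    have hsum : ∑ τ ∈ Finset.univ.filter (fun τ => τ ≤ t), σ2 * ((n τ : ℝ) * γ τ j)
        = σ2 * ∑ τ ∈ Finset.univ.filter (fun τ => τ ≤ t), γ τ j * (n τ : ℝ) := by
      rw [Finset.mul_sum]; exact Finset.sum_congr rfl fun τ _ => by ring
    rw [hsum]
    have hnum : (σ2 / v j) ^ 2
        + σ2 * ∑ τ ∈ Finset.univ.filter (fun τ => τ ≤ t), γ τ j * (n τ : ℝ)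
        = σ2 * Dv t j := by
      simp only [hDv]
      field_simp
    rw [hnum, sq, mul_div_mul_right _ _ hDj]
  -- orthogonality
  have horth : ∀ err : Fin p → ℝ, ∑ j, ((Uᵀ *ᵥ err) j) ^ 2 = ∑ j, (err j) ^ 2 := by
    intro err
    have h1 : ∑ j, ((Uᵀ *ᵥ err) j) ^ 2 = (Uᵀ *ᵥ err) ⬝ᵥ (Uᵀ *ᵥ err) := by
      simp [dotProduct, sq]
    rw [h1, Matrix.dotProduct_mulVec, Matrix.mulVec_transpose, Matrix.vecMul_vecMul, hUUT,
      Matrix.vecMul_one]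
    simp [dotProduct, sq]
  -- assemble
  calc ∫ ω, ∑ j, (wES ((t : ℕ) + 1) ω j - wstar j) ^ 2 ∂μ
      = ∫ ω, ∑ j, ((Uᵀ *ᵥ (wES ((t : ℕ) + 1) ω - wstar)) j) ^ 2 ∂μ := by
        refine integral_congr_ae (Filter.Eventually.of_forall fun ω => ?_)
        simpa using (horth (wES ((t : ℕ) + 1) ω - wstar)).symm
    _ = ∑ j, ∫ ω, ((Uᵀ *ᵥ (wES ((t : ℕ) + 1) ω - wstar)) j) ^ 2 ∂μ := by
        refine integral_finset_sum _ fun j _ => ?_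
        have hDj : Dv t j ≠ 0 := (hDpos t j).ne'
        have hrw : (fun ω => ((Uᵀ *ᵥ (wES ((t : ℕ) + 1) ω - wstar)) j) ^ 2)
            = fun ω => ((-(σ2 / v j)
                + ∑ τ ∈ Finset.univ.filter (fun τ => τ ≤ t), ξ τ j ω) / Dv t j) ^ 2 := by
          funext ω
          have h8 : (Uᵀ *ᵥ (wES ((t : ℕ) + 1) ω - wstar)) j
              = (-(σ2 / v j)
                  + ∑ τ ∈ Finset.univ.filter (fun τ => τ ≤ t), ξ τ j ω) / Dv t j := by
            rw [eq_div_iff hDj, mul_comm]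
            exact hkey ω j
          rw [h8]
        rw [hrw]
        simp only [div_pow]
        have hM : MemLp (fun ω => -(σ2 / v j)
            + ∑ τ ∈ Finset.univ.filter (fun τ => τ ≤ t), ξ τ j ω) 2 μ :=
          MemLp.add (memLp_const (-(σ2 / v j))) (hSL2 j)
        have hI := (MemLp.integrable_sq hM).div_const (Dv t j ^ 2)
        exact hI
    _ = ∑ j, σ2 / Dv t j := Finset.sum_congr rfl fun j _ => hj j
    _ = ∑ j, σ2 / (σ2 / (∑ k, U k j * wstar k) ^ 2
          + ∑ τ ∈ Finset.univ.filter (fun τ => τ ≤ t), γ τ j * n τ) := by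
        simp only [hDv, hv]
end
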